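/- arXiv:1404.2425 — 6 statements merged into one kernel-verified Lean document; each statement's English description precedes it below -/
import Mathlib

section
/- In the weighted-tree setup, let λ and κ be positive constants satisfying d·κ^λ·E[(1−Υ)^λ] < 1. Then almost surely there exists N such that for all n ≥ N, max_{C ∈ 𝒢_{n,r}} M(C) ≤ κ^{−n}. -/
open MeasureTheory ProbabilityTheory

/-- Vertices of the infinite rooted `d`-ary tree: finite sequences over `{1,…,d}`.
The root is the empty list; the offspring of `v` are `i :: v` for `i : Fin d`. -/
abbrev Vtx (d : ℕ) := List (Fin d)

/-- `J` is (the vertex set of) a subtree of the infinite `d`-ary tree, i.e. a nonempty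
set of vertices which is connected in the tree: it has a minimal vertex `m` (an ancestor
of all its vertices) and contains, for each of its vertices `v`, all vertices on the
path from `m` to `v`.  (Here `u <:+ v`, i.e. `u` is a suffix of `v`, means that `u` is an
ancestor of `v` or `v` itself.) -/
def IsSubtreeSet {d : ℕ} (J : Finset (Vtx d)) : Prop :=
  ∃ m ∈ J, ∀ v ∈ J, m <:+ v ∧ ∀ u : Vtx d, m <:+ u → u <:+ v → u ∈ J

/-- Every vertex of `J` has at most `r` offspring in `J`. -/
def IsRarySet {d : ℕ} (r : ℕ) (J : Finset (Vtx d)) : Prop :=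
  ∀ v ∈ J, (Finset.univ.filter fun i : Fin d => (i :: v) ∈ J).card ≤ r

/-- The minimum of the sums `b i₁ + ⋯ + b iₖ` over all `k`-element subsets
`{i₁ < ⋯ < iₖ}` of `{1, …, d}`. -/
noncomputable def minSum (d k : ℕ) (b : Fin d → ℝ) : ℝ :=
  sInf {x | ∃ S : Finset (Fin d), S.card = k ∧ x = ∑ i ∈ S, b i}

/-- `C` belongs to `𝒢_{n,r}`: a set of at most `r^n` vertices at distance `n` from the
root that are contained in a common `r`-ary subtree of the infinite `d`-ary tree. -/
def MemG (d r n : ℕ) (C : Finset (Vtx d)) : Prop :=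
  C.card ≤ r ^ n ∧ (∀ v ∈ C, v.length = n) ∧
    ∃ J : Finset (Vtx d), IsSubtreeSet J ∧ IsRarySet r J ∧ C ⊆ J

section minSum

variable {d k : ℕ} {b : Fin d → ℝ}

lemma minSum_finite (b : Fin d → ℝ) :
    Set.Finite {x | ∃ S : Finset (Fin d), S.card = k ∧ x = ∑ i ∈ S, b i} := by
  apply (Set.finite_range (fun S : Finset (Fin d) => ∑ i ∈ S, b i)).subset
  rintro x ⟨S, -, rfl⟩; exact ⟨S, rfl⟩

lemma minSum_le {S : Finset (Fin d)} (hS : S.card = k) : minSum d k b ≤ ∑ i ∈ S, b i :=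
  csInf_le (minSum_finite b).bddBelow ⟨S, hS, rfl⟩

lemma minSum_nonempty (hk : k ≤ d) :
    {x | ∃ S : Finset (Fin d), S.card = k ∧ x = ∑ i ∈ S, b i}.Nonempty := by
  obtain ⟨S, -, hS⟩ := Finset.exists_subset_card_eq
    (show k ≤ (Finset.univ : Finset (Fin d)).card by simpa using hk)
  exact ⟨_, S, hS, rfl⟩

lemma le_minSum (hk : k ≤ d) {c : ℝ}
    (h : ∀ S : Finset (Fin d), S.card = k → c ≤ ∑ i ∈ S, b i) : c ≤ minSum d k b := by
  refine le_csInf (minSum_nonempty hk) ?_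
  rintro x ⟨S, hS, rfl⟩; exact h S hS

lemma minSum_nonneg (hk : k ≤ d) (hb : ∀ i, 0 ≤ b i) : 0 ≤ minSum d k b :=
  le_minSum hk fun S _ => Finset.sum_nonneg fun i _ => hb i

lemma minSum_le_one (hk : k ≤ d) (hb : ∀ i, 0 ≤ b i) (hb1 : ∑ i, b i = 1) :
    minSum d k b ≤ 1 := by
  obtain ⟨S, -, hS⟩ := Finset.exists_subset_card_eq
    (show k ≤ (Finset.univ : Finset (Fin d)).card by simpa using hk)
  refine (minSum_le hS).trans ?_
  rw [← hb1]
  exact Finset.sum_le_sum_of_subset_of_nonneg (Finset.subset_univ S) fun i _ _ => hb i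

lemma measurable_finset_inf' {ι α : Type*} [MeasurableSpace α] (s : Finset ι) (hs : s.Nonempty)
    (g : ι → α → ℝ) (hg : ∀ i, Measurable (g i)) :
    Measurable fun a => s.inf' hs fun i => g i a := by
  induction hs using Finset.Nonempty.cons_induction with
  | singleton i => simpa using hg i
  | cons i s his hs ih => simpa [Finset.inf'_cons hs] using (hg i).min ih

lemma measurable_minSum (hk : k ≤ d) : Measurable fun b : Fin d → ℝ => minSum d k b := by
  have hT : ((Finset.univ : Finset (Finset (Fin d))).filter fun S => S.card = k).Nonempty := by
    obtain ⟨S, -, hS⟩ := Finset.exists_subset_card_eq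
      (show k ≤ (Finset.univ : Finset (Fin d)).card by simpa using hk)
    exact ⟨S, by simp [hS]⟩
  have : (fun b : Fin d → ℝ => minSum d k b) =
      fun b => ((Finset.univ : Finset (Finset (Fin d))).filter fun S => S.card = k).inf' hT
        (fun S => ∑ i ∈ S, b i) := by
    funext b
    rw [Finset.inf'_eq_csInf_image, minSum]
    congr 1
    ext x
    simp only [Finset.coe_filter, Set.mem_image, Set.mem_setOf_eq, Finset.mem_univ, true_and]
    constructor
    · rintro ⟨S, hS, rfl⟩; exact ⟨S, hS, rfl⟩
    · rintro ⟨S, hS, rfl⟩; exact ⟨S, hS, rfl⟩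
  rw [this]
  exact measurable_finset_inf' _ hT _ fun S => Finset.measurable_sum _ fun i _ => measurable_pi_apply i

end minSum

/-- Product of the weights along the path starting just below `w`, following steps `s`. -/
noncomputable def RPrev {d : ℕ} (y : Vtx d → Fin d → ℝ) : Vtx d → List (Fin d) → ℝ
  | _, [] => 1
  | w, i :: s => y w i * RPrev y (i :: w) s

/-- Relative mass of `ν` below `w` (assuming `w <:+ ν`). -/
noncomputable def relM {d : ℕ} (y : Vtx d → Fin d → ℝ) (w ν : Vtx d) : ℝ :=
  RPrev y w (ν.take (ν.length - w.length)).reverse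

noncomputable def phi (d r : ℕ) (lam : ℝ) : ℕ → Vtx d → (Vtx d → Fin d → ℝ) → ℝ
  | 0, _, _ => 1
  | n+1, w, y => (1 - minSum d (d - r) (y w)) ^ lam * ∑ i : Fin d, phi d r lam n (i :: w) y

section det

variable {d r : ℕ} {y : Vtx d → Fin d → ℝ} {lam : ℝ}

lemma RPrev_append (y : Vtx d → Fin d → ℝ) :
    ∀ (s : List (Fin d)) (w : Vtx d) (j : Fin d),
      RPrev y w (s ++ [j]) = RPrev y w s * y (s.reverse ++ w) j := by
  intro s
  induction s with
  | nil => intro w j; simp [RPrev]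
  | cons i s ih =>
    intro w j
    simp only [List.cons_append, RPrev]
    rw [ih (i :: w) j, List.reverse_cons, List.append_assoc,
      List.singleton_append, mul_assoc]

lemma prod_tails_eq (x : Vtx d → ℝ) (hroot : x [] = 1) :
    ∀ ν : Vtx d, (ν.tails.map x).prod = RPrev (fun w i => x (i :: w)) ([] : Vtx d) ν.reverse := by
  intro ν
  induction ν with
  | nil => simp [RPrev, hroot]
  | cons j ν ih =>
    rw [List.tails_cons, List.map_cons, List.prod_cons, ih, List.reverse_cons,
      RPrev_append, List.reverse_reverse, List.append_nil]
    ring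

lemma IsSuffix.eq_drop {α : Type*} {s l : List α} (h : s <:+ l) :
    s = l.drop (l.length - s.length) := by
  obtain ⟨a, rfl⟩ := h
  simp [List.drop_left']

lemma suffix_eq_of_length {α : Type*} {s t l : List α} (h1 : s <:+ l) (h2 : t <:+ l)
    (h : s.length = t.length) : s = t := by
  rw [IsSuffix.eq_drop h1, IsSuffix.eq_drop h2, h]

lemma RPrev_nonneg (hy0 : ∀ w i, 0 ≤ y w i) : ∀ (s : List (Fin d)) (w : Vtx d),
    0 ≤ RPrev y w s := by
  intro s
  induction s with
  | nil => intro w; simp [RPrev]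
  | cons i s ih => intro w; exact mul_nonneg (hy0 w i) (ih (i :: w))

lemma relM_nonneg (hy0 : ∀ w i, 0 ≤ y w i) (w ν : Vtx d) : 0 ≤ relM y w ν :=
  RPrev_nonneg hy0 _ _

lemma relM_self (w : Vtx d) : relM y w w = 1 := by
  simp [relM, RPrev]

lemma relM_step {w ν : Vtx d} {i : Fin d} (h : (i :: w) <:+ ν) :
    relM y w ν = y w i * relM y (i :: w) ν := by
  obtain ⟨u, rfl⟩ := h
  have h1 : (u ++ i :: w).length - w.length = u.length + 1 := by
    simp; omega
  have h2 : (u ++ i :: w).length - (i :: w).length = u.length := by simp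
  have h3 : (u ++ i :: w).take (u.length + 1) = u ++ [i] := by
    have : u ++ i :: w = (u ++ [i]) ++ w := by simp
    rw [this, List.take_left' (by simp)]
  have h4 : (u ++ i :: w).take u.length = u := List.take_left' rfl
  rw [relM, relM, h1, h2, h3, h4, List.reverse_append]
  simp [RPrev]

lemma one_sub_minSum_nonneg (hy0 : ∀ w i, 0 ≤ y w i) (hy1 : ∀ w, ∑ i, y w i = 1) (w : Vtx d) :
    0 ≤ 1 - minSum d (d - r) (y w) :=
  sub_nonneg.2 (minSum_le_one (Nat.sub_le d r) (hy0 w) (hy1 w))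

lemma one_sub_minSum_le_one (hy0 : ∀ w i, 0 ≤ y w i) (w : Vtx d) :
    1 - minSum d (d - r) (y w) ≤ 1 := by
  have := minSum_nonneg (b := y w) (Nat.sub_le d r) (hy0 w)
  linarith

lemma phi_nonneg (hlam : 0 ≤ lam) (hy0 : ∀ w i, 0 ≤ y w i) (hy1 : ∀ w, ∑ i, y w i = 1) :
    ∀ (n : ℕ) (w : Vtx d), 0 ≤ phi d r lam n w y := by
  intro n
  induction n with
  | zero => intro w; exact zero_le_one
  | succ n ih =>
    intro w
    exact mul_nonneg (Real.rpow_nonneg (one_sub_minSum_nonneg hy0 hy1 w) lam)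
      (Finset.sum_nonneg fun i _ => ih (i :: w))

lemma phi_le_pow (hlam : 0 ≤ lam) (hy0 : ∀ w i, 0 ≤ y w i) (hy1 : ∀ w, ∑ i, y w i = 1) :
    ∀ (n : ℕ) (w : Vtx d), phi d r lam n w y ≤ (d : ℝ) ^ n := by
  intro n
  induction n with
  | zero => intro w; simp [phi]
  | succ n ih =>
    intro w
    have h1 : (1 - minSum d (d - r) (y w)) ^ lam ≤ 1 :=
      Real.rpow_le_one (one_sub_minSum_nonneg hy0 hy1 w) (one_sub_minSum_le_one hy0 w) hlam
    have h2 : ∑ i : Fin d, phi d r lam n (i :: w) y ≤ (d : ℝ) ^ (n + 1) := by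
      calc ∑ i : Fin d, phi d r lam n (i :: w) y ≤ ∑ _i : Fin d, (d : ℝ) ^ n :=
            Finset.sum_le_sum fun i _ => ih (i :: w)
        _ = (d : ℝ) ^ (n + 1) := by simp [pow_succ]; ring
    calc phi d r lam (n + 1) w y ≤ 1 * ∑ i : Fin d, phi d r lam n (i :: w) y := by
          refine mul_le_mul_of_nonneg_right h1 ?_
          exact Finset.sum_nonneg fun i _ => phi_nonneg hlam hy0 hy1 n (i :: w)
      _ ≤ (d : ℝ) ^ (n + 1) := by rw [one_mul]; exact h2

lemma det_bound (hd : 0 < d) (hlam : 0 < lam)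
    (hy0 : ∀ w i, 0 ≤ y w i) (hy1 : ∀ w, ∑ i, y w i = 1) :
    ∀ (n : ℕ) (w : Vtx d) (C J : Finset (Vtx d)), w ∈ J →
      (∀ v ∈ J, w <:+ v ∧ ∀ u : Vtx d, w <:+ u → u <:+ v → u ∈ J) →
      IsRarySet r J → C ⊆ J → (∀ v ∈ C, v.length = n + w.length) →
      (∑ ν ∈ C, relM y w ν) ^ lam ≤ phi d r lam n w y := by
  haveI : Nonempty (Fin d) := ⟨⟨0, hd⟩⟩
  intro n
  induction n with
  | zero =>
    intro w C J hwJ hJ hrary hCJ hlen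
    have hC : C ⊆ {w} := by
      intro ν hν
      have h1 : w <:+ ν := (hJ ν (hCJ hν)).1
      have h2 : ν.length = w.length := by simpa using hlen ν hν
      rw [Finset.mem_singleton]
      exact (suffix_eq_of_length h1 (List.suffix_refl ν) h2.symm).symm
    rcases Finset.subset_singleton_iff.1 hC with rfl | rfl
    · simp [phi, Real.zero_rpow (ne_of_gt hlam)]
    · simp [phi, relM_self]
  | succ n ih =>
    intro w C J hwJ hJ hrary hCJ hlen
    classical
    set Ci : Fin d → Finset (Vtx d) := fun i => C.filter fun ν => (i :: w) <:+ ν with hCi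
    set m : Fin d → ℝ := fun i => ∑ ν ∈ Ci i, relM y (i :: w) ν with hm
    have hex : ∀ ν ∈ C, ∃ i : Fin d, (i :: w) <:+ ν := by
      intro ν hν
      obtain ⟨u, rfl⟩ := (hJ ν (hCJ hν)).1
      rcases List.eq_nil_or_concat' u with rfl | ⟨u', i, rfl⟩
      · have := hlen _ hν; simp at this
      · exact ⟨i, u', by simp⟩
    have huniq : ∀ ν ∈ C, ∀ i j : Fin d, (i :: w) <:+ ν → (j :: w) <:+ ν → i = j := by
      intro ν _ i j hi hj
      have := suffix_eq_of_length hi hj rfl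
      simpa using this
    have hmem : ∀ i : Fin d, (Ci i).Nonempty → (i :: w) ∈ J := by
      intro i ⟨ν, hν⟩
      rw [hCi] at hν
      rw [Finset.mem_filter] at hν
      exact (hJ ν (hCJ hν.1)).2 _ ⟨[i], rfl⟩ hν.2
    have hsum_split : ∑ ν ∈ C, relM y w ν = ∑ i : Fin d, ∑ ν ∈ Ci i, relM y w ν := by
      rw [eq_comm]
      set g : Vtx d → Fin d := fun ν =>
        if h : ∃ i : Fin d, (i :: w) <:+ ν then h.choose else Classical.arbitrary _ with hg
      have hgC : ∀ ν ∈ C, ∀ i : Fin d, (g ν = i ↔ (i :: w) <:+ ν) := by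
        intro ν hν i
        have hx := hex ν hν
        rw [hg]; simp only [hx, dif_pos]
        constructor
        · rintro rfl; exact hx.choose_spec
        · intro hi; exact huniq ν hν _ _ hx.choose_spec hi
      have hfe : ∀ i : Fin d, Ci i = C.filter fun ν => g ν = i := by
        intro i
        rw [hCi]
        apply Finset.filter_congr
        intro ν hν
        simp [hgC ν hν i, eq_comm]
      calc ∑ i : Fin d, ∑ ν ∈ Ci i, relM y w ν
          = ∑ i : Fin d, ∑ ν ∈ C.filter (fun ν => g ν = i), relM y w ν :=
            Finset.sum_congr rfl fun i _ => by rw [hfe i]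
        _ = ∑ ν ∈ C, relM y w ν :=
            Finset.sum_fiberwise_of_maps_to (fun ν _ => Finset.mem_univ (g ν)) _
    have hfiber : ∀ i : Fin d, ∑ ν ∈ Ci i, relM y w ν = y w i * m i := by
      intro i
      rw [hm, Finset.mul_sum]
      refine Finset.sum_congr rfl fun ν hν => ?_
      rw [hCi, Finset.mem_filter] at hν
      exact relM_step hν.2
    obtain ⟨istar, -, hMi⟩ := Finset.exists_mem_eq_sup' Finset.univ_nonempty m
    set M : ℝ := Finset.univ.sup' Finset.univ_nonempty m with hMdef
    have hm_nonneg : ∀ i, 0 ≤ m i :=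
      fun i => Finset.sum_nonneg fun ν _ => relM_nonneg hy0 _ _
    have hM0 : 0 ≤ M := hMi ▸ hm_nonneg istar
    have hmM : ∀ i, m i ≤ M := fun i => Finset.le_sup' m (Finset.mem_univ i)
    set S' : Finset (Fin d) := Finset.univ.filter fun i => (i :: w) ∈ J with hS'
    have hS'card : S'.card ≤ r := hrary w hwJ
    have hwt : ∑ i ∈ S', y w i ≤ 1 - minSum d (d - r) (y w) := by
      have hcompl : d - r ≤ S'ᶜ.card := by
        rw [Finset.card_compl]
        simp only [Fintype.card_fin]
        omega
      obtain ⟨T, hTsub, hTcard⟩ := Finset.exists_subset_card_eq hcompl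
      have h1 : minSum d (d - r) (y w) ≤ ∑ i ∈ T, y w i := minSum_le hTcard
      have h2 : ∑ i ∈ T, y w i ≤ ∑ i ∈ S'ᶜ, y w i :=
        Finset.sum_le_sum_of_subset_of_nonneg hTsub fun i _ _ => hy0 w i
      have h3 : ∑ i ∈ S', y w i + ∑ i ∈ S'ᶜ, y w i = 1 := by
        rw [Finset.sum_add_sum_compl]; exact hy1 w
      linarith
    have hrestrict : ∑ i : Fin d, y w i * m i = ∑ i ∈ S', y w i * m i := by
      rw [eq_comm]
      apply Finset.sum_subset (Finset.subset_univ S')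
      intro i _ hiS'
      have hCiE : Ci i = ∅ := by
        rw [Finset.eq_empty_iff_forall_notMem]
        intro ν hν
        apply hiS'
        rw [hS', Finset.mem_filter]
        exact ⟨Finset.mem_univ i, hmem i ⟨ν, hν⟩⟩
      have hmi : m i = 0 := by rw [hm]; simp only [hCiE, Finset.sum_empty]
      rw [hmi, mul_zero]
    have hchain : ∑ ν ∈ C, relM y w ν ≤ (1 - minSum d (d - r) (y w)) * M := by
      rw [hsum_split]
      have e1 : ∑ i : Fin d, ∑ ν ∈ Ci i, relM y w ν = ∑ i ∈ S', y w i * m i := by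
        rw [← hrestrict]
        exact Finset.sum_congr rfl fun i _ => hfiber i
      rw [e1]
      have e2 : ∑ i ∈ S', y w i * m i ≤ ∑ i ∈ S', y w i * M :=
        Finset.sum_le_sum fun i _ => mul_le_mul_of_nonneg_left (hmM i) (hy0 w i)
      have e3 : ∑ i ∈ S', y w i * M = (∑ i ∈ S', y w i) * M := by rw [Finset.sum_mul]
      have e4 : (∑ i ∈ S', y w i) * M ≤ (1 - minSum d (d - r) (y w)) * M :=
        mul_le_mul_of_nonneg_right hwt hM0
      linarith
    have hsum_nonneg : 0 ≤ ∑ ν ∈ C, relM y w ν :=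
      Finset.sum_nonneg fun ν _ => relM_nonneg hy0 _ _
    have h1m : 0 ≤ 1 - minSum d (d - r) (y w) := one_sub_minSum_nonneg hy0 hy1 w
    have hMlam : M ^ lam ≤ ∑ i : Fin d, phi d r lam n (i :: w) y := by
      by_cases hCne : (Ci istar).Nonempty
      · have hIH : (m istar) ^ lam ≤ phi d r lam n (istar :: w) y := by
          refine ih (istar :: w) (Ci istar) (J.filter fun v => (istar :: w) <:+ v) ?_ ?_ ?_ ?_ ?_
          · rw [Finset.mem_filter]
            exact ⟨hmem istar hCne, List.suffix_refl _⟩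
          · intro v hv
            rw [Finset.mem_filter] at hv
            refine ⟨hv.2, fun u hu1 hu2 => ?_⟩
            rw [Finset.mem_filter]
            have hwu : w <:+ u := (List.suffix_cons istar w).trans hu1
            exact ⟨(hJ v hv.1).2 u hwu hu2, hu1⟩
          · intro v hv
            rw [Finset.mem_filter] at hv
            refine le_trans (Finset.card_le_card ?_) (hrary v hv.1)
            intro i hi
            simp only [Finset.mem_filter, Finset.mem_univ, true_and] at hi ⊢
            exact hi.1
          · intro ν hν
            rw [hCi, Finset.mem_filter] at hν
            rw [Finset.mem_filter]
            exact ⟨hCJ hν.1, hν.2⟩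
          · intro ν hν
            rw [hCi, Finset.mem_filter] at hν
            have := hlen ν hν.1
            simp only [List.length_cons]
            omega
        calc M ^ lam = (m istar) ^ lam := by rw [hMi]
          _ ≤ phi d r lam n (istar :: w) y := hIH
          _ ≤ ∑ i : Fin d, phi d r lam n (i :: w) y :=
              Finset.single_le_sum (fun i _ => phi_nonneg hlam.le hy0 hy1 n (i :: w))
                (Finset.mem_univ istar)
      · have hz : m istar = 0 := by
          rw [Finset.not_nonempty_iff_eq_empty] at hCne
          rw [hm]; simp only [hCne, Finset.sum_empty]
        rw [hMi, hz, Real.zero_rpow (ne_of_gt hlam)]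
        exact Finset.sum_nonneg fun i _ => phi_nonneg hlam.le hy0 hy1 n (i :: w)
    calc (∑ ν ∈ C, relM y w ν) ^ lam
        ≤ ((1 - minSum d (d - r) (y w)) * M) ^ lam :=
          Real.rpow_le_rpow hsum_nonneg hchain hlam.le
      _ = (1 - minSum d (d - r) (y w)) ^ lam * M ^ lam := Real.mul_rpow h1m hM0
      _ ≤ (1 - minSum d (d - r) (y w)) ^ lam * ∑ i : Fin d, phi d r lam n (i :: w) y :=
          mul_le_mul_of_nonneg_left hMlam (Real.rpow_nonneg h1m lam)
      _ = phi d r lam (n + 1) w y := rfl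

end det

section dep

variable {d r : ℕ} {lam : ℝ}

/-- The finite set of vertices that `phi n w` depends on. -/
noncomputable def depSet (d : ℕ) : ℕ → Vtx d → Finset (Vtx d)
  | 0, _ => ∅
  | n + 1, w => insert w (Finset.univ.biUnion fun i : Fin d => depSet d n (i :: w))

lemma depSet_suffix : ∀ (n : ℕ) (w σ : Vtx d), σ ∈ depSet d n w → w <:+ σ := by
  intro n
  induction n with
  | zero => intro w σ h; simp [depSet] at h
  | succ n ih =>
    intro w σ h
    rw [depSet, Finset.mem_insert] at h
    rcases h with rfl | h
    · exact List.suffix_refl _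
    · rw [Finset.mem_biUnion] at h
      obtain ⟨i, -, hi⟩ := h
      exact (List.suffix_cons i w).trans (ih (i :: w) σ hi)

lemma phi_congr {y y' : Vtx d → Fin d → ℝ} :
    ∀ (n : ℕ) (w : Vtx d), (∀ σ ∈ depSet d n w, y σ = y' σ) →
      phi d r lam n w y = phi d r lam n w y' := by
  intro n
  induction n with
  | zero => intro w h; rfl
  | succ n ih =>
    intro w h
    have hw : y w = y' w := h w (by rw [depSet]; exact Finset.mem_insert_self _ _)
    have hsub : ∀ i : Fin d, ∀ σ ∈ depSet d n (i :: w), y σ = y' σ := by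
      intro i σ hσ
      refine h σ ?_
      rw [depSet, Finset.mem_insert]
      exact Or.inr (Finset.mem_biUnion.2 ⟨i, Finset.mem_univ i, hσ⟩)
    show _ * _ = _ * _
    rw [hw]
    congr 1
    exact Finset.sum_congr rfl fun i _ => ih (i :: w) (hsub i)

lemma measurable_phi : ∀ (n : ℕ) (w : Vtx d),
    Measurable fun y : Vtx d → Fin d → ℝ => phi d r lam n w y := by
  intro n
  induction n with
  | zero => intro w; simpa [phi] using measurable_const
  | succ n ih =>
    intro w
    have h1 : Measurable fun y : Vtx d → Fin d → ℝ =>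
        (1 - minSum d (d - r) (y w)) ^ lam :=
      ((measurable_const.sub ((measurable_minSum (Nat.sub_le d r)).comp
        (measurable_pi_apply w))).pow_const lam)
    exact h1.mul (Finset.measurable_sum Finset.univ fun i _ => ih (i :: w))

lemma suffix_of_suffix_length_le {α : Type*} {s t l : List α} (h1 : s <:+ l) (h2 : t <:+ l)
    (h : s.length ≤ t.length) : s <:+ t := by
  rw [IsSuffix.eq_drop h1, IsSuffix.eq_drop h2]
  have heq : l.length - s.length = (l.length - t.length) +
      (l.length - s.length - (l.length - t.length)) := by
    have := h1.length_le
    have := h2.length_le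
    omega
  rw [heq, ← List.drop_drop]
  exact List.drop_suffix _ _

end dep

theorem statement7 (d r : ℕ) (hr : 0 < r) (hrd : r < d)
    {Ω : Type*} [MeasurableSpace Ω] (μ : Measure Ω) [IsProbabilityMeasure μ]
    -- the weighted-tree setup
    (X : Vtx d → Ω → ℝ) (hmeas : ∀ ν, Measurable (X ν))
    (hroot : ∀ ω, X [] ω = 1)
    (hval : ∀ ν ω, X ν ω ∈ Set.Ioc (0 : ℝ) 1)
    (hsum : ∀ ν : Vtx d, ∀ᵐ ω ∂μ, ∑ i : Fin d, X (i :: ν) ω = 1)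
    (hindep : ProbabilityTheory.iIndepFun
        (fun ν ω => (fun i : Fin d => X (i :: ν) ω)) μ)
    (hident : ∀ ν ν' : Vtx d,
        Measure.map (fun ω => (fun i : Fin d => X (i :: ν) ω)) μ =
          Measure.map (fun ω => (fun i : Fin d => X (i :: ν') ω)) μ)
    -- `Υ ν = min {X (νi₁) + ⋯ + X (νi_{d-r}) : 1 ≤ i₁ < ⋯ < i_{d-r} ≤ d}`
    (Υ : Vtx d → Ω → ℝ)
    (hΥ : ∀ ν ω, Υ ν ω = minSum d (d - r) (fun i => X (i :: ν) ω))
    -- the constants κ, λ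
    (κ lam : ℝ) (hκ : 0 < κ) (hlam : 0 < lam)
    (hcond : (d : ℝ) * κ ^ lam * ∫ ω, (1 - Υ [] ω) ^ lam ∂μ < 1) :
    -- a.s. eventually, `max_{C ∈ 𝒢_{n,r}} M(C) ≤ κ⁻ⁿ`, where
    -- `M(ν) = ∏_{σ ∈ [root, ν]} X σ` (the product over the ancestors of `ν`, inclusive)
    ∀ᵐ ω ∂μ, ∃ N : ℕ, ∀ n ≥ N, ∀ C : Finset (Vtx d), MemG d r n C →
      ∑ ν ∈ C, (ν.tails.map fun σ => X σ ω).prod ≤ κ ^ (-(n : ℤ)) := by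
  classical
  have hd : 0 < d := hr.trans hrd
  haveI : Nonempty (Fin d) := ⟨⟨0, hd⟩⟩
  set Y : Ω → Vtx d → Fin d → ℝ := fun ω σ i => X (i :: σ) ω with hYdef
  have hYmeas : Measurable Y :=
    measurable_pi_lambda _ fun σ => measurable_pi_lambda _ fun i => hmeas (i :: σ)
  have hvecmeas : ∀ w : Vtx d, Measurable fun ω => (fun i : Fin d => X (i :: w) ω) :=
    fun w => measurable_pi_lambda _ fun i => hmeas (i :: w)
  have hAmeas : ∀ (n : ℕ) (w : Vtx d), Measurable fun ω => phi d r lam n w (Y ω) :=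
    fun n w => (measurable_phi n w).comp hYmeas
  have hG : ∀ᵐ ω ∂μ, ∀ ν : Vtx d, ∑ i : Fin d, X (i :: ν) ω = 1 := ae_all_iff.2 hsum
  have hy0 : ∀ (ω : Ω) (w : Vtx d) (i : Fin d), 0 ≤ Y ω w i := fun ω w i => (hval (i :: w) ω).1.le
  -- integrability and nonnegativity of the `A n w`
  have hAnonneg : ∀ (n : ℕ) (w : Vtx d), 0 ≤ᵐ[μ] fun ω => phi d r lam n w (Y ω) := by
    intro n w
    filter_upwards [hG] with ω hω
    exact phi_nonneg hlam.le (hy0 ω) hω n w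
  have hAint : ∀ (n : ℕ) (w : Vtx d), Integrable (fun ω => phi d r lam n w (Y ω)) μ := by
    intro n w
    refine ⟨(hAmeas n w).aestronglyMeasurable, HasFiniteIntegral.of_bounded (C := (d : ℝ) ^ n) ?_⟩
    filter_upwards [hG] with ω hω
    rw [Real.norm_eq_abs, abs_le]
    have h0 : 0 ≤ phi d r lam n w (Y ω) := phi_nonneg hlam.le (hy0 ω) hω n w
    have h1 : phi d r lam n w (Y ω) ≤ (d : ℝ) ^ n := phi_le_pow hlam.le (hy0 ω) hω n w
    have h2 : (0 : ℝ) ≤ (d : ℝ) ^ n := pow_nonneg (Nat.cast_nonneg d) n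
    exact ⟨by linarith, h1⟩
  -- the common value of the integral of `(1 - Υ)^lam`
  set g : (Fin d → ℝ) → ℝ := fun b => (1 - minSum d (d - r) b) ^ lam with hgdef
  have hgmeas : Measurable g :=
    (measurable_const.sub (measurable_minSum (Nat.sub_le d r))).pow_const lam
  set I : ℝ := ∫ ω, g (Y ω ([] : Vtx d)) ∂μ with hIdef
  have hIcond : (d : ℝ) * κ ^ lam * I < 1 := by
    have : (fun ω => (1 - Υ ([] : Vtx d) ω) ^ lam) = fun ω => g (Y ω ([] : Vtx d)) := by
      funext ω; rw [hgdef]; simp only [hΥ]; rfl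
    rwa [this] at hcond
  have hI0 : 0 ≤ I := by
    refine integral_nonneg_of_ae ?_
    filter_upwards [hG] with ω hω
    exact Real.rpow_nonneg (one_sub_minSum_nonneg (hy0 ω) hω ([] : Vtx d)) lam
  -- the integral recursion
  have hAint_eq : ∀ (n : ℕ) (w : Vtx d),
      ∫ ω, phi d r lam n w (Y ω) ∂μ = ((d : ℝ) * I) ^ n := by
    intro n
    induction n with
    | zero => intro w; simp [phi]
    | succ n ih =>
      intro w
      set T : Finset (Vtx d) := Finset.univ.biUnion (fun i : Fin d => depSet d n (i :: w)) with hT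
      set f1 : Ω → ℝ := fun ω => g (Y ω w) with hf1def
      set f2 : Ω → ℝ := fun ω => ∑ i : Fin d, phi d r lam n (i :: w) (Y ω) with hf2def
      have hdisj : Disjoint ({w} : Finset (Vtx d)) T := by
        rw [Finset.disjoint_singleton_left]
        intro hwT
        rw [hT, Finset.mem_biUnion] at hwT
        obtain ⟨i, -, hi⟩ := hwT
        have := (depSet_suffix n (i :: w) w hi).length_le
        simp at this
      have hbase := hindep.indepFun_finset {w} T hdisj
        (fun ν => measurable_pi_lambda _ fun i => hmeas (i :: ν))
      set φ1 : ({x // x ∈ ({w} : Finset (Vtx d))} → Fin d → ℝ) → ℝ :=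
        fun z => g (z ⟨w, Finset.mem_singleton_self w⟩) with hφ1def
      set ext : ({x // x ∈ T} → Fin d → ℝ) → Vtx d → Fin d → ℝ :=
        fun z σ => if h : σ ∈ T then z ⟨σ, h⟩ else 0 with hextdef
      set φ2 : ({x // x ∈ T} → Fin d → ℝ) → ℝ :=
        fun z => ∑ i : Fin d, phi d r lam n (i :: w) (ext z) with hφ2def
      have hφ1 : Measurable φ1 := hgmeas.comp (measurable_pi_apply _)
      have hext : Measurable ext := by
        refine measurable_pi_lambda _ fun σ => ?_
        by_cases h : σ ∈ T
        · simp only [hextdef, dif_pos h]; exact measurable_pi_apply _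
        · simp only [hextdef, dif_neg h]; exact measurable_const
      have hφ2 : Measurable φ2 :=
        Finset.measurable_sum _ fun i _ => (measurable_phi n (i :: w)).comp hext
      have hindep12 : ProbabilityTheory.IndepFun f1 f2 μ := by
        have h := hbase.comp hφ1 hφ2
        have hf1eq : f1 = φ1 ∘ (fun a (ν : ({w} : Finset (Vtx d))) =>
            fun i : Fin d => X (i :: (ν : Vtx d)) a) := rfl
        have hf2eq : f2 = φ2 ∘ (fun a (ν : (T : Finset (Vtx d))) =>
            fun i : Fin d => X (i :: (ν : Vtx d)) a) := by
          funext ω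
          show ∑ i : Fin d, phi d r lam n (i :: w) (Y ω) = ∑ i : Fin d, phi d r lam n (i :: w) _
          refine Finset.sum_congr rfl fun i _ => ?_
          refine phi_congr n (i :: w) fun σ hσ => ?_
          have hσT : σ ∈ T := by
            rw [hT, Finset.mem_biUnion]; exact ⟨i, Finset.mem_univ i, hσ⟩
          simp only [hextdef, dif_pos hσT]; rfl
        rw [hf1eq, hf2eq]
        exact h
      have hf1meas : Measurable f1 := hgmeas.comp (hvecmeas w)
      have hf1int : Integrable f1 μ := by
        refine ⟨hf1meas.aestronglyMeasurable, HasFiniteIntegral.of_bounded (C := (1 : ℝ)) ?_⟩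
        filter_upwards [hG] with ω hω
        rw [Real.norm_eq_abs, abs_le]
        have h0 : 0 ≤ f1 ω := Real.rpow_nonneg (one_sub_minSum_nonneg (hy0 ω) hω w) lam
        have h1 : f1 ω ≤ 1 :=
          Real.rpow_le_one (one_sub_minSum_nonneg (hy0 ω) hω w)
            (one_sub_minSum_le_one (hy0 ω) w) hlam.le
        constructor <;> linarith
      have hf2int : Integrable f2 μ := integrable_finset_sum _ fun i _ => hAint n (i :: w)
      have hstep : ∫ ω, phi d r lam (n + 1) w (Y ω) ∂μ = (∫ ω, f1 ω ∂μ) * ∫ ω, f2 ω ∂μ := by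
        rw [← hindep12.integral_mul_eq_mul_integral hf1int.1 hf2int.1]
        rfl
      have hident1 : ∫ ω, f1 ω ∂μ = I := by
        calc ∫ ω, f1 ω ∂μ = ∫ b, g b ∂(Measure.map (fun ω => fun i : Fin d => X (i :: w) ω) μ) :=
              (integral_map (hvecmeas w).aemeasurable hgmeas.aestronglyMeasurable).symm
          _ = ∫ b, g b ∂(Measure.map (fun ω => fun i : Fin d => X (i :: ([] : Vtx d)) ω) μ) := by
              rw [hident w ([] : Vtx d)]
          _ = ∫ ω, g (Y ω ([] : Vtx d)) ∂μ :=
              integral_map (hvecmeas ([] : Vtx d)).aemeasurable hgmeas.aestronglyMeasurable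
      have hf2val : ∫ ω, f2 ω ∂μ = (d : ℝ) * ((d : ℝ) * I) ^ n := by
        rw [hf2def]
        rw [integral_finset_sum _ fun i _ => hAint n (i :: w)]
        simp [ih]
      rw [hstep, hident1, hf2val]
      ring
  -- Markov + Borel–Cantelli
  set c : ℝ := κ ^ lam * ((d : ℝ) * I) with hcdef
  have hc0 : 0 ≤ c := mul_nonneg (Real.rpow_nonneg hκ.le lam)
    (mul_nonneg (Nat.cast_nonneg d) hI0)
  have hc1 : c < 1 := by rw [hcdef]; nlinarith [hIcond]
  set t : ℕ → ℝ := fun n => ((κ : ℝ) ^ (-(n : ℤ))) ^ lam with htdef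
  have ht_pos : ∀ n, 0 < t n := fun n => Real.rpow_pos_of_pos (zpow_pos hκ _) _
  have ht_eq : ∀ n : ℕ, t n = ((κ ^ lam) ^ n)⁻¹ := by
    intro n
    simp only [htdef]
    rw [zpow_neg, zpow_natCast, ← Real.rpow_natCast κ n,
      Real.inv_rpow (Real.rpow_nonneg hκ.le _), ← Real.rpow_mul hκ.le, mul_comm,
      Real.rpow_mul hκ.le, Real.rpow_natCast]
  set E : ℕ → Set Ω := fun n => {ω | t n ≤ phi d r lam n ([] : Vtx d) (Y ω)} with hEdef
  have hmarkov : ∀ n, (μ (E n)).toReal ≤ c ^ n := by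
    intro n
    have h1 := mul_meas_ge_le_integral_of_nonneg (hAnonneg n ([] : Vtx d)) (hAint n ([] : Vtx d)) (t n)
    rw [hAint_eq n ([] : Vtx d)] at h1
    have h2 := mul_le_mul_of_nonneg_left h1 (inv_nonneg.2 (ht_pos n).le)
    rw [← mul_assoc, inv_mul_cancel₀ (ht_pos n).ne', one_mul] at h2
    calc (μ (E n)).toReal ≤ (t n)⁻¹ * ((d : ℝ) * I) ^ n := h2
      _ = (κ ^ lam) ^ n * ((d : ℝ) * I) ^ n := by rw [ht_eq n, inv_inv]
      _ = c ^ n := by rw [hcdef]; ring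
  have hsum_fin : (∑' n, μ (E n)) ≠ ⊤ := by
    have hle : ∀ n, μ (E n) ≤ ENNReal.ofReal (c ^ n) := by
      intro n
      rw [← ENNReal.ofReal_toReal (measure_ne_top μ (E n))]
      exact ENNReal.ofReal_le_ofReal (hmarkov n)
    have h2 : (∑' n, μ (E n)) ≤ ∑' n, (ENNReal.ofReal c) ^ n := by
      refine ENNReal.tsum_le_tsum fun n => (hle n).trans ?_
      rw [ENNReal.ofReal_pow hc0]
    refine ne_top_of_le_ne_top ?_ h2
    rw [ENNReal.tsum_geometric]
    refine ENNReal.inv_ne_top.2 ?_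
    intro h
    have := tsub_eq_zero_iff_le.1 h
    exact absurd this (by simpa using ENNReal.ofReal_lt_one.2 hc1)
  -- final assembly
  filter_upwards [hG, ae_eventually_notMem hsum_fin] with ω hGω hev
  rw [Filter.eventually_atTop] at hev
  obtain ⟨N, hN⟩ := hev
  refine ⟨N, fun n hn C hC => ?_⟩
  obtain ⟨-, hlen, J, ⟨m0, hm0J, hm0⟩, hrary, hCJ⟩ := hC
  set J' : Finset (Vtx d) := J ∪ m0.tails.toFinset with hJ'def
  have hJ'mem : ∀ v : Vtx d, v ∈ J' ↔ v ∈ J ∨ v <:+ m0 := by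
    intro v
    rw [hJ'def, Finset.mem_union, List.mem_toFinset, List.mem_tails]
  have hJ'root : ([] : Vtx d) ∈ J' := (hJ'mem ([] : Vtx d)).2 (Or.inr (List.nil_suffix))
  have hJ'sub : ∀ v ∈ J', ([] : Vtx d) <:+ v ∧
      ∀ u : Vtx d, ([] : Vtx d) <:+ u → u <:+ v → u ∈ J' := by
    intro v hv
    refine ⟨List.nil_suffix, fun u _ huv => ?_⟩
    rcases (hJ'mem v).1 hv with hvJ | hvm
    · have hm0v := (hm0 v hvJ).1
      by_cases hcase : u.length ≤ m0.length
      · exact (hJ'mem u).2 (Or.inr (suffix_of_suffix_length_le huv hm0v hcase))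
      · refine (hJ'mem u).2 (Or.inl ?_)
        exact (hm0 v hvJ).2 u (suffix_of_suffix_length_le hm0v huv (by omega)) huv
    · exact (hJ'mem u).2 (Or.inr (huv.trans hvm))
  have hJ'rary : IsRarySet r J' := by
    intro v hv
    by_cases hvJ : v ∈ J
    · refine le_trans (Finset.card_le_card ?_) (hrary v hvJ)
      intro i hi
      rw [Finset.mem_filter] at hi ⊢
      refine ⟨hi.1, ?_⟩
      rcases (hJ'mem _).1 hi.2 with h | h
      · exact h
      · exfalso
        have h1 := h.length_le
        have h2 := (hm0 v hvJ).1.length_le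
        simp at h1
        omega
    · have hvm : v <:+ m0 := ((hJ'mem v).1 hv).resolve_left hvJ
      refine le_trans (Finset.card_le_one.2 ?_) hr
      intro i hi j hj
      rw [Finset.mem_filter] at hi hj
      have key : ∀ k : Fin d, (k :: v) ∈ J' → (k :: v) <:+ m0 := by
        intro k hk
        rcases (hJ'mem _).1 hk with hkJ | hkm
        · have h1 : m0 <:+ k :: v := (hm0 _ hkJ).1
          by_cases hl : m0.length ≤ v.length
          · exfalso
            have h2 : m0 <:+ v := suffix_of_suffix_length_le h1 (List.suffix_cons k v) (by simpa)
            exact hvJ ((hm0 _ hkJ).2 v h2 (List.suffix_cons k v))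
          · have h3 : m0 = k :: v := by
              refine suffix_eq_of_length h1 (List.suffix_refl _) ?_
              have := h1.length_le
              simp at this ⊢
              omega
            rw [h3]
        · exact hkm
      have hij := suffix_eq_of_length (key i hi.2) (key j hj.2) rfl
      simpa using hij
  have hCJ' : C ⊆ J' := fun ν hν => (hJ'mem ν).2 (Or.inl (hCJ hν))
  have hlen' : ∀ v ∈ C, v.length = n + ([] : Vtx d).length := by
    intro v hv; simpa using hlen v hv
  have hdet := det_bound hd hlam (hy0 ω) hGω n ([] : Vtx d) C J' hJ'root hJ'sub hJ'rary hCJ' hlen'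
  have hMeq : ∀ ν ∈ C, (ν.tails.map fun σ => X σ ω).prod = relM (Y ω) ([] : Vtx d) ν := by
    intro ν _
    have h1 := prod_tails_eq (fun σ => X σ ω) (hroot ω) ν
    have h2 : relM (Y ω) ([] : Vtx d) ν = RPrev (Y ω) ([] : Vtx d) ν.reverse := by
      rw [relM]
      simp [List.take_length]
    rw [h2, ← h1]
  have hsum_eq : ∑ ν ∈ C, (ν.tails.map fun σ => X σ ω).prod = ∑ ν ∈ C, relM (Y ω) ([] : Vtx d) ν :=
    Finset.sum_congr rfl hMeq
  have hnotE : phi d r lam n ([] : Vtx d) (Y ω) < t n := by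
    have := hN n hn
    rw [hEdef] at this
    simpa using not_le.1 this
  have hlt : (∑ ν ∈ C, relM (Y ω) ([] : Vtx d) ν) ^ lam < t n := lt_of_le_of_lt hdet hnotE
  by_contra hcon
  push_neg at hcon
  rw [hsum_eq] at hcon
  have hb : (0 : ℝ) < κ ^ (-(n : ℤ)) := zpow_pos hκ _
  have : t n ≤ (∑ ν ∈ C, relM (Y ω) ([] : Vtx d) ν) ^ lam := by
    rw [htdef]
    exact Real.rpow_le_rpow hb.le hcon.le hlam.le
  linarith
end

section
/- In the weighted-tree setup, let λ and κ be positive constants satisfying d·κ^λ·E[(1−Υ)^λ] < 1. Then almost surely there exists N such that for all n ≥ N and every vertex ν with |ν| = n, ∏_{σ∈[r,p(ν)]} (1−Υ_σ)^{−1} ≥ κ^n. -/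
open MeasureTheory ProbabilityTheory

lemma aux_nodup_tails {α : Type*} (l : List α) : l.tails.Nodup := by
  induction l with
  | nil => simp
  | cons a l ih =>
    rw [List.tails_cons]
    refine List.Nodup.cons (fun h => ?_) ih
    have := (List.mem_tails _ _).mp h
    have := this.length_le
    simp at this

lemma aux_measurable_inf' {ι α : Type*} [MeasurableSpace α] {s : Finset ι} (hs : s.Nonempty)
    (f : ι → α → ℝ) (hf : ∀ i, Measurable (f i)) :
    Measurable fun x => s.inf' hs fun i => f i x := by
  induction hs using Finset.Nonempty.cons_induction with
  | singleton a => simpa using hf a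
  | cons a s ha hs ih =>
    have : (fun x => (Finset.cons a s ha).inf' (Finset.cons_nonempty ha) fun i => f i x)
        = fun x => min (f a x) (s.inf' hs fun i => f i x) := by
      funext x; rw [Finset.inf'_cons]
    rw [this]
    exact (hf a).min ih

lemma aux_powersetCard_nonempty {d k : ℕ} (hk : k ≤ d) :
    (Finset.powersetCard k (Finset.univ : Finset (Fin d))).Nonempty := by
  obtain ⟨S, -, hS⟩ := Finset.exists_subset_card_eq (show k ≤ (Finset.univ : Finset (Fin d)).card by simpa using hk)
  exact ⟨S, Finset.mem_powersetCard_univ.2 hS⟩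

lemma minSum_eq_inf' {d k : ℕ} (hk : k ≤ d) (b : Fin d → ℝ) :
    minSum d k b = (Finset.powersetCard k (Finset.univ : Finset (Fin d))).inf'
      (aux_powersetCard_nonempty hk) (fun S => ∑ i ∈ S, b i) := by
  rw [Finset.inf'_eq_csInf_image, minSum]
  congr 1
  ext x
  simp only [Set.mem_setOf_eq, Set.mem_image, Finset.mem_coe, Finset.mem_powersetCard_univ]
  constructor
  · rintro ⟨S, h1, h2⟩; exact ⟨S, h1, h2.symm⟩
  · rintro ⟨S, h1, h2⟩; exact ⟨S, h1, h2.symm⟩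

lemma aux_integral_finset_prod {Ω ι : Type*} [MeasurableSpace Ω] {μ : Measure Ω}
    [IsProbabilityMeasure μ] (Y : ι → Ω → ℝ)
    (hmeas : ∀ i, Measurable (Y i)) (hpos : ∀ i ω, 0 ≤ Y i ω)
    (hindep : iIndepFun Y μ) (S : Finset ι) :
    ∫ ω, ∏ i ∈ S, Y i ω ∂μ = ∏ i ∈ S, ∫ ω, Y i ω ∂μ := by
  classical
  induction S using Finset.cons_induction with
  | empty => simp
  | cons a s ha ih =>
    have h1 : IndepFun (Y a) (∏ j ∈ s, Y j) μ :=
      (hindep.indepFun_finsetProd_of_notMem hmeas ha).symm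
    have h2 := h1.integral_mul_eq_mul_integral
      (hmeas a).aestronglyMeasurable (show AEStronglyMeasurable (∏ j ∈ s, Y j) μ by
        have : (∏ j ∈ s, Y j) = fun ω => ∏ j ∈ s, Y j ω := by funext ω; simp [Finset.prod_apply]
        rw [this]; exact (Finset.measurable_prod s fun i _ => hmeas i).aestronglyMeasurable)
    simp only [Finset.prod_cons]
    calc ∫ ω, Y a ω * ∏ i ∈ s, Y i ω ∂μ
        = ∫ ω, (Y a * ∏ j ∈ s, Y j) ω ∂μ := by
          refine integral_congr_ae (Filter.Eventually.of_forall fun ω => ?_)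
          simp [Finset.prod_apply]
      _ = (∫ ω, Y a ω ∂μ) * ∫ ω, (∏ j ∈ s, Y j) ω ∂μ := h2
      _ = (∫ ω, Y a ω ∂μ) * ∏ i ∈ s, ∫ ω, Y i ω ∂μ := by
          rw [← ih]
          congr 1
          refine integral_congr_ae (Filter.Eventually.of_forall fun ω => ?_)
          simp [Finset.prod_apply]

set_option maxHeartbeats 1000000 in
theorem statement8 (d r : ℕ) (hr : 0 < r) (hrd : r < d)
    {Ω : Type*} [MeasurableSpace Ω] (μ : Measure Ω) [IsProbabilityMeasure μ]
    -- the weighted-tree setup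
    (X : Vtx d → Ω → ℝ) (hmeas : ∀ ν, Measurable (X ν))
    (hroot : ∀ ω, X [] ω = 1)
    (hval : ∀ ν ω, X ν ω ∈ Set.Ioc (0 : ℝ) 1)
    (hsum : ∀ ν : Vtx d, ∀ᵐ ω ∂μ, ∑ i : Fin d, X (i :: ν) ω = 1)
    (hindep : ProbabilityTheory.iIndepFun
        (fun ν ω => (fun i : Fin d => X (i :: ν) ω)) μ)
    (hident : ∀ ν ν' : Vtx d,
        Measure.map (fun ω => (fun i : Fin d => X (i :: ν) ω)) μ =
          Measure.map (fun ω => (fun i : Fin d => X (i :: ν') ω)) μ)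
    -- `Υ ν = min {X (νi₁) + ⋯ + X (νi_{d-r}) : 1 ≤ i₁ < ⋯ < i_{d-r} ≤ d}`
    (Υ : Vtx d → Ω → ℝ)
    (hΥ : ∀ ν ω, Υ ν ω = minSum d (d - r) (fun i => X (i :: ν) ω))
    -- the constants κ, λ
    (κ lam : ℝ) (hκ : 0 < κ) (hlam : 0 < lam)
    (hcond : (d : ℝ) * κ ^ lam * ∫ ω, (1 - Υ [] ω) ^ lam ∂μ < 1) :
    -- a.s. eventually, for every vertex `ν` at level `n`,
    -- `∏_{σ ∈ [root, p(ν)]} (1 - Υ σ)⁻¹ ≥ κ ^ n`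
    -- (the product is over the ancestors of the parent `ν.tail` of `ν`, inclusive)
    ∀ᵐ ω ∂μ, ∃ N : ℕ, ∀ n ≥ N, ∀ ν : Vtx d, ν.length = n →
      κ ^ n ≤ (ν.tail.tails.map fun σ => (1 - Υ σ ω)⁻¹).prod := by
  classical
  set k := d - r with hkdef
  have hk1 : 0 < k := Nat.sub_pos_of_lt hrd
  have hkd : k ≤ d := Nat.sub_le _ _
  -- the function computing Y from the offspring weight vector
  set g : (Fin d → ℝ) → ℝ := fun b => |1 - minSum d k b| ^ lam with hgdef
  have hminSum_meas : Measurable fun b : Fin d → ℝ => minSum d k b := by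
    have : (fun b : Fin d → ℝ => minSum d k b)
        = fun b => (Finset.powersetCard k (Finset.univ : Finset (Fin d))).inf'
          (aux_powersetCard_nonempty hkd) (fun S => ∑ i ∈ S, b i) := by
      funext b; exact minSum_eq_inf' hkd b
    rw [this]
    exact aux_measurable_inf' _ _ fun S => Finset.measurable_sum _ fun i _ => measurable_pi_apply i
  have hgm : Measurable g :=
    (Real.continuous_rpow_const hlam.le).measurable.comp (measurable_const.sub hminSum_meas).abs
  set Y : Vtx d → Ω → ℝ := fun ν => g ∘ (fun ω => fun i : Fin d => X (i :: ν) ω) with hYdef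
  have hYmeas : ∀ ν, Measurable (Y ν) :=
    fun ν => hgm.comp (measurable_pi_lambda _ fun i => hmeas _)
  have hYnonneg : ∀ ν ω, 0 ≤ Y ν ω := fun ν ω => Real.rpow_nonneg (abs_nonneg _) _
  have hYindep : iIndepFun Y μ :=
    hindep.comp (fun _ => g) (fun _ => hgm)
  have hYeq : ∀ ν ω, Y ν ω = |1 - Υ ν ω| ^ lam := by
    intro ν ω; simp only [hYdef, Function.comp_apply, hgdef, hΥ ν ω]
  -- Υ is positive
  have hΥpos : ∀ ν ω, 0 < Υ ν ω := by
    intro ν ω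
    rw [hΥ, minSum_eq_inf' hkd]
    rw [Finset.lt_inf'_iff]
    intro S hS
    rw [Finset.mem_powersetCard_univ] at hS
    refine Finset.sum_pos (fun i _ => (hval _ ω).1) ?_
    rw [← Finset.card_pos, hS]; exact hk1
  -- Υ < 1 almost surely
  have hΥlt1 : ∀ ν : Vtx d, ∀ᵐ ω ∂μ, Υ ν ω < 1 := by
    intro ν
    filter_upwards [hsum ν] with ω hω
    rw [hΥ, minSum_eq_inf' hkd]
    obtain ⟨S₀, -, hS₀⟩ := Finset.exists_subset_card_eq
      (show k ≤ (Finset.univ : Finset (Fin d)).card by simpa using hkd)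
    have h1 : (Finset.powersetCard k (Finset.univ : Finset (Fin d))).inf'
        (aux_powersetCard_nonempty hkd) (fun S => ∑ i ∈ S, (fun i : Fin d => X (i :: ν) ω) i)
        ≤ ∑ i ∈ S₀, X (i :: ν) ω :=
      Finset.inf'_le _ (Finset.mem_powersetCard_univ.2 hS₀)
    have h2 : ∑ i ∈ S₀ᶜ, X (i :: ν) ω + ∑ i ∈ S₀, X (i :: ν) ω = 1 := by
      rw [Finset.sum_compl_add_sum]; exact hω
    have h3 : 0 < ∑ i ∈ S₀ᶜ, X (i :: ν) ω := by
      refine Finset.sum_pos (fun i _ => (hval _ ω).1) ?_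
      rw [← Finset.card_pos, Finset.card_compl, hS₀]
      simpa [hkdef] using by omega
    calc (Finset.powersetCard k (Finset.univ : Finset (Fin d))).inf'
          (aux_powersetCard_nonempty hkd) (fun S => ∑ i ∈ S, (fun i : Fin d => X (i :: ν) ω) i)
        ≤ ∑ i ∈ S₀, X (i :: ν) ω := h1
      _ < 1 := by linarith
  have hG : ∀ᵐ ω ∂μ, ∀ ν : Vtx d, Υ ν ω < 1 := ae_all_iff.2 hΥlt1
  -- on the good set, Y has the expected form and is ≤ 1
  have hYle1 : ∀ (ω : Ω), (∀ ν : Vtx d, Υ ν ω < 1) → ∀ ν, Y ν ω ≤ 1 := by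
    intro ω hω ν
    rw [hYeq]
    refine Real.rpow_le_one (abs_nonneg _) ?_ hlam.le
    have h1 := hΥpos ν ω
    have h2 := hω ν
    rw [abs_le]; constructor <;> linarith
  -- the constant c
  set c : ℝ := ∫ ω, (1 - Υ [] ω) ^ lam ∂μ with hcdef
  have hcY : ∫ ω, Y [] ω ∂μ = c := by
    refine integral_congr_ae ?_
    filter_upwards [hΥlt1 []] with ω hω
    rw [hYeq, abs_of_pos (by linarith)]
  have hc0 : 0 ≤ c := by
    rw [← hcY]; exact integral_nonneg fun ω => hYnonneg _ _
  -- identical distribution of the Y's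
  have hYident : ∀ ν : Vtx d, ∫ ω, Y ν ω ∂μ = c := by
    intro ν
    have hFm : ∀ ν' : Vtx d, AEMeasurable (fun ω => fun i : Fin d => X (i :: ν') ω) μ :=
      fun ν' => (measurable_pi_lambda _ fun i => hmeas _).aemeasurable
    have e1 : ∫ ω, Y ν ω ∂μ = ∫ b, g b ∂(Measure.map (fun ω => fun i : Fin d => X (i :: ν) ω) μ) :=
      (integral_map (hFm ν) hgm.aestronglyMeasurable).symm
    rw [e1, hident ν List.nil, integral_map (hFm List.nil) hgm.aestronglyMeasurable]
    exact hcY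
  -- Markov bound for a single vertex
  set ρ : ℝ := (d : ℝ) * κ ^ lam * c with hρdef
  have hρ0 : 0 ≤ ρ := by
    have : (0:ℝ) < κ ^ lam := Real.rpow_pos_of_pos hκ lam
    positivity
  have hρ1 : ρ < 1 := hcond
  set ε : ℕ → ℝ := fun n => ((κ ^ lam) ^ n)⁻¹ with hεdef
  have hκlam : (0:ℝ) < κ ^ lam := Real.rpow_pos_of_pos hκ lam
  have hε : ∀ n, 0 < ε n := fun n => inv_pos.2 (pow_pos hκlam n)
  set B : ℕ → Set Ω := fun n => ⋃ f : Fin n → Fin d,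
    {ω | ε n ≤ ∏ σ ∈ ((List.ofFn f).tail.tails).toFinset, Y σ ω} with hBdef
  have hμB : ∀ n, μ (B n) ≤ ENNReal.ofReal ρ ^ n := by
    intro n
    rcases Nat.eq_zero_or_pos n with hn | hn
    · subst hn; simpa using prob_le_one
    have key : ∀ f : Fin n → Fin d,
        μ {ω | ε n ≤ ∏ σ ∈ ((List.ofFn f).tail.tails).toFinset, Y σ ω}
          ≤ ENNReal.ofReal ((c * κ ^ lam) ^ n) := by
      intro f
      set T : Finset (Vtx d) := ((List.ofFn f).tail.tails).toFinset with hTdef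
      have hTcard : T.card = n := by
        rw [hTdef, List.toFinset_card_of_nodup (aux_nodup_tails _)]
        rw [List.length_tails, List.length_tail, List.length_ofFn]
        omega
      set Z : Ω → ℝ := fun ω => ∏ σ ∈ T, Y σ ω with hZdef
      have hZmeas : Measurable Z := Finset.measurable_prod T fun i _ => hYmeas i
      have hZnonneg : ∀ ω, 0 ≤ Z ω := fun ω => Finset.prod_nonneg fun i _ => hYnonneg i ω
      have hZint : Integrable Z μ := by
        refine Integrable.mono' (integrable_const 1) hZmeas.aestronglyMeasurable ?_
        filter_upwards [hG] with ω hω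
        rw [Real.norm_eq_abs, abs_of_nonneg (hZnonneg ω)]
        exact Finset.prod_le_one (fun i _ => hYnonneg i ω) (fun i _ => hYle1 ω hω i)
      have hZval : ∫ ω, Z ω ∂μ = c ^ n := by
        rw [hZdef, aux_integral_finset_prod Y hYmeas hYnonneg hYindep T]
        rw [Finset.prod_congr rfl fun σ _ => hYident σ, Finset.prod_const, hTcard]
      have hmarkov := mul_meas_ge_le_integral_of_nonneg
        (Filter.Eventually.of_forall hZnonneg) hZint (ε n)
      rw [hZval] at hmarkov
      have htop : μ {ω | ε n ≤ Z ω} ≠ ⊤ := measure_ne_top μ _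
      rw [ENNReal.le_ofReal_iff_toReal_le htop (by positivity)]
      have h4 := mul_le_mul_of_nonneg_left hmarkov (pow_pos hκlam n).le
      rw [← mul_assoc, hεdef] at h4
      rw [mul_inv_cancel₀ (pow_pos hκlam n).ne', one_mul] at h4
      calc (μ {ω | ε n ≤ Z ω}).toReal ≤ (κ ^ lam) ^ n * c ^ n := h4
        _ = (c * κ ^ lam) ^ n := by rw [mul_pow]; ring
    calc μ (B n) ≤ ∑ f : Fin n → Fin d,
          μ {ω | ε n ≤ ∏ σ ∈ ((List.ofFn f).tail.tails).toFinset, Y σ ω} :=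
            measure_iUnion_fintype_le μ _
      _ ≤ (Finset.univ : Finset (Fin n → Fin d)).card • ENNReal.ofReal ((c * κ ^ lam) ^ n) :=
            Finset.sum_le_card_nsmul _ _ _ fun f _ => key f
      _ = (d ^ n : ℕ) * ENNReal.ofReal ((c * κ ^ lam) ^ n) := by
            rw [Finset.card_univ, nsmul_eq_mul]
            congr 1
            simp [Fintype.card_fun]
      _ = ENNReal.ofReal ρ ^ n := by
            rw [← ENNReal.ofReal_natCast (d ^ n), ← ENNReal.ofReal_mul (by positivity),
              ← ENNReal.ofReal_pow hρ0]
            congr 1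
            push_cast
            rw [← mul_pow, hρdef]
            ring_nf
  -- Borel–Cantelli
  have hsum_ne : (∑' n, μ (B n)) ≠ ⊤ := by
    refine ne_top_of_le_ne_top ?_ (ENNReal.tsum_le_tsum hμB)
    rw [ENNReal.tsum_geometric]
    refine ENNReal.inv_ne_top.2 ?_
    have : ENNReal.ofReal ρ < 1 := ENNReal.ofReal_lt_one.2 hρ1
    exact (tsub_pos_of_lt this).ne'
  filter_upwards [ae_eventually_notMem hsum_ne, hG] with ω hev hGω
  obtain ⟨N, hN⟩ := Filter.eventually_atTop.1 hev
  refine ⟨max N 1, fun n hn ν hνlen => ?_⟩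
  by_contra hbad
  push_neg at hbad
  subst hνlen
  have h1n : 1 ≤ ν.length := le_trans (le_max_right _ _) hn
  set T : Finset (Vtx d) := ν.tail.tails.toFinset with hTdef
  have hpos : ∀ σ ∈ T, 0 < 1 - Υ σ ω := fun σ _ => by have := hGω σ; linarith
  set P : ℝ := ∏ σ ∈ T, (1 - Υ σ ω) with hPdef
  have hP : 0 < P := Finset.prod_pos hpos
  have hprodeq : (ν.tail.tails.map fun σ => (1 - Υ σ ω)⁻¹).prod = P⁻¹ := by
    rw [← List.prod_toFinset _ (aux_nodup_tails _), ← hTdef, hPdef, ← Finset.prod_inv_distrib]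
  rw [hprodeq] at hbad
  have hκn : (0:ℝ) < κ ^ ν.length := pow_pos hκ _
  have h5 : (κ ^ ν.length)⁻¹ < P := by
    have := inv_strictAnti₀ (inv_pos.2 hP) hbad
    rwa [inv_inv] at this
  have h6 : ε ν.length ≤ P ^ lam := by
    have e1 : ((κ ^ ν.length : ℝ))⁻¹ ^ lam ≤ P ^ lam :=
      (Real.rpow_le_rpow (inv_pos.2 hκn).le h5.le hlam.le)
    calc ε ν.length = ((κ ^ ν.length : ℝ))⁻¹ ^ lam := by
          rw [hεdef, Real.inv_rpow hκn.le]
          congr 2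
          rw [← Real.rpow_natCast κ ν.length, ← Real.rpow_mul hκ.le, mul_comm,
            Real.rpow_mul hκ.le, Real.rpow_natCast]
      _ ≤ P ^ lam := e1
  have h7 : P ^ lam = ∏ σ ∈ T, Y σ ω := by
    rw [hPdef, ← Real.finset_prod_rpow T _ (fun σ hσ => (hpos σ hσ).le)]
    exact Finset.prod_congr rfl fun σ hσ => by
      rw [hYeq, abs_of_pos (hpos σ hσ)]
  have hmem : ω ∈ B ν.length := by
    simp only [hBdef]
    refine Set.mem_iUnion.2 ⟨ν.get, ?_⟩
    show ε ν.length ≤ ∏ σ ∈ ((List.ofFn ν.get).tail.tails).toFinset, Y σ ω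
    rw [List.ofFn_get]
    exact h6.trans (le_of_eq h7)
  exact hN ν.length (le_trans (le_max_left _ _) hn) hmem
end

section
/- Let d ≥ 2 be an integer and let B₁,…,B_n be independent random variables each distributed as Beta(1/(d−1),1). Then for every real β with 0 < β ≤ e^{1−d}, P(∏_{i=1}^{n} B_i ≤ β^n) ≤ ((e·log(1/β)·β^{1/(d−1)})/(d−1))^n. -/
open MeasureTheory ProbabilityTheory
section Aux
open Set
lemma aux_lintegral_prod_indep {Ω : Type*} [MeasurableSpace Ω] (μ : Measure Ω)
    [IsProbabilityMeasure μ] {n : ℕ} (Y : Fin n → Ω → ENNReal)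
    (hYm : ∀ i, Measurable (Y i))
    (hYindep : iIndepFun Y μ) (s : Finset (Fin n)) :
    ∫⁻ ω, ∏ i ∈ s, Y i ω ∂μ = ∏ i ∈ s, ∫⁻ ω, Y i ω ∂μ := by
  classical
  induction s using Finset.induction_on with
  | empty => simp
  | insert a s hi ih =>
    have hindep2 : IndepFun (∏ j ∈ s, Y j) (Y a) μ :=
      hYindep.indepFun_finsetProd_of_notMem hYm hi
    have hfun : (∏ j ∈ s, Y j) = fun ω => ∏ j ∈ s, Y j ω := by
      ext ω; simp
    have hprodm : Measurable (∏ j ∈ s, Y j) := by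
      rw [hfun]; exact Finset.measurable_prod s fun i _ => hYm i
    have key := lintegral_mul_eq_lintegral_mul_lintegral_of_indepFun''
      hprodm.aemeasurable (hYm a).aemeasurable hindep2
    simp only [hfun] at key
    simp only [Finset.prod_insert hi]
    rw [← ih, mul_comm (∫⁻ ω, Y a ω ∂μ), ← key]
    apply lintegral_congr; intro ω; rw [mul_comm]
lemma aux_moment_bound {Ω : Type*} [MeasurableSpace Ω] (μ : Measure Ω)
    [IsProbabilityMeasure μ] (B : Ω → ℝ) (hB : Measurable B)
    {a : ℝ} (ha : 0 < a)
    (hdist : ∀ x ∈ Set.Icc (0 : ℝ) 1, μ {ω | B ω ≤ x} = ENNReal.ofReal (x ^ a))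
    {s : ℝ} (hs : 0 < s) (hsa : s < a) :
    ∫⁻ ω, ENNReal.ofReal (B ω ^ (-s)) ∂μ ≤ ENNReal.ofReal (a / (a - s)) := by
  have hnull : μ {ω | B ω ≤ 0} = 0 := by
    rw [hdist 0 ⟨le_refl 0, zero_le_one⟩, Real.zero_rpow ha.ne', ENNReal.ofReal_zero]
  have hpos : ∀ᵐ ω ∂μ, 0 < B ω := by
    rw [ae_iff]
    have h : {ω | ¬ 0 < B ω} = {ω | B ω ≤ 0} := by ext ω; simp [not_lt]
    rw [h, hnull]
  have hf_nn : 0 ≤ᵐ[μ] fun ω => B ω ^ (-s) := by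
    filter_upwards [hpos] with ω hω
    exact (Real.rpow_pos_of_pos hω _).le
  have hf_mble : AEMeasurable (fun ω => B ω ^ (-s)) μ :=
    (hB.pow measurable_const).aemeasurable
  rw [lintegral_eq_lintegral_meas_lt μ hf_nn hf_mble]
  set p : ℝ := a / s with hp
  have hp1 : 1 < p := (one_lt_div hs).mpr hsa
  have hbound : ∀ t ∈ Ioi (0:ℝ), μ {ω | t < B ω ^ (-s)} ≤
      ENNReal.ofReal (min 1 (t ^ (-p))) := by
    intro t ht
    rw [mem_Ioi] at ht
    rcases le_or_gt t 1 with h1 | h1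
    · have h2 : (1:ℝ) ≤ t ^ (-p) :=
        Real.one_le_rpow_of_pos_of_le_one_of_nonpos ht h1 (by linarith)
      rw [min_eq_left h2, ENNReal.ofReal_one]
      exact prob_le_one
    · have hmin : min 1 (t ^ (-p)) = t ^ (-p) :=
        min_eq_right (Real.rpow_le_one_of_one_le_of_nonpos h1.le (by linarith))
      rw [hmin]
      have hmeq : μ {ω | t < B ω ^ (-s)} = μ ({ω | t < B ω ^ (-s)} ∩ {ω | 0 < B ω}) := by
        refine (measure_inter_conull ?_).symm
        have h : {ω | 0 < B ω}ᶜ = {ω | B ω ≤ 0} := by ext ω; simp [not_lt]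
        rw [h]; exact hnull
      have hsub : {ω | t < B ω ^ (-s)} ∩ {ω | 0 < B ω} ⊆ {ω | B ω ≤ t ^ (-(1/s))} := by
        rintro ω ⟨h1', h2'⟩
        simp only [mem_setOf_eq] at *
        have hBw : (B ω ^ (-s)) ^ (-(1/s)) = B ω := by
          rw [← Real.rpow_mul h2'.le]
          have h : (-s) * (-(1/s)) = 1 := by field_simp
          rw [h, Real.rpow_one]
        have hlt := Real.rpow_lt_rpow_of_neg ht h1'
          (neg_lt_zero.mpr (by positivity : (0:ℝ) < 1/s))
        rw [hBw] at hlt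
        exact hlt.le
      have hle1 : t ^ (-(1/s)) ∈ Set.Icc (0:ℝ) 1 :=
        ⟨Real.rpow_nonneg (by linarith) _,
          Real.rpow_le_one_of_one_le_of_nonpos h1.le
            (neg_nonpos.mpr (by positivity : (0:ℝ) ≤ 1/s))⟩
      have hval : (t ^ (-(1/s))) ^ a = t ^ (-p) := by
        rw [← Real.rpow_mul (by linarith : (0:ℝ) ≤ t)]
        congr 1
        rw [hp]; field_simp
      calc μ {ω | t < B ω ^ (-s)}
          = μ ({ω | t < B ω ^ (-s)} ∩ {ω | 0 < B ω}) := hmeq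
        _ ≤ μ {ω | B ω ≤ t ^ (-(1/s))} := measure_mono hsub
        _ = ENNReal.ofReal ((t ^ (-(1/s))) ^ a) := hdist _ hle1
        _ = ENNReal.ofReal (t ^ (-p)) := by rw [hval]
  have hgm : Measurable fun t : ℝ => ENNReal.ofReal (min 1 (t ^ (-p))) :=
    (measurable_const.min (measurable_id.pow measurable_const)).ennreal_ofReal
  calc ∫⁻ t in Ioi (0:ℝ), μ {ω | t < B ω ^ (-s)}
      ≤ ∫⁻ t in Ioi (0:ℝ), ENNReal.ofReal (min 1 (t ^ (-p))) :=
        setLIntegral_mono hgm hbound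
    _ = (∫⁻ t in Ioc (0:ℝ) 1, ENNReal.ofReal (min 1 (t ^ (-p)))) +
        ∫⁻ t in Ioi (1:ℝ), ENNReal.ofReal (min 1 (t ^ (-p))) := by
        rw [← lintegral_union measurableSet_Ioi (Ioc_disjoint_Ioi le_rfl),
          Ioc_union_Ioi_eq_Ioi zero_le_one]
    _ = (∫⁻ _ in Ioc (0:ℝ) 1, (1 : ENNReal)) +
        ∫⁻ t in Ioi (1:ℝ), ENNReal.ofReal (t ^ (-p)) := by
        congr 1
        · apply setLIntegral_congr_fun measurableSet_Ioc
          intro t ht; dsimp only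
          rw [min_eq_left (Real.one_le_rpow_of_pos_of_le_one_of_nonpos ht.1 ht.2
            (by linarith)), ENNReal.ofReal_one]
        · apply setLIntegral_congr_fun measurableSet_Ioi
          intro t ht; dsimp only
          rw [min_eq_right (Real.rpow_le_one_of_one_le_of_nonpos (le_of_lt ht)
            (by linarith))]
    _ = 1 + ENNReal.ofReal (1 / (p - 1)) := by
        congr 1
        · simp [Real.volume_Ioc]
        · rw [← ofReal_integral_eq_lintegral_ofReal
            (integrableOn_Ioi_rpow_of_lt (by linarith) zero_lt_one)]
          · rw [integral_Ioi_rpow_of_lt (by linarith) zero_lt_one]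
            rw [Real.one_rpow, show -p + 1 = -(p-1) by ring, div_neg, neg_div, neg_neg]
          · filter_upwards [ae_restrict_mem measurableSet_Ioi] with t ht
            exact Real.rpow_nonneg (by simp at ht; linarith) _
    _ = ENNReal.ofReal (1 + 1 / (p - 1)) := by
        rw [ENNReal.ofReal_add zero_le_one (div_nonneg zero_le_one (by linarith)),
          ENNReal.ofReal_one]
    _ = ENNReal.ofReal (a / (a - s)) := by
        congr 1
        have hne : a - s ≠ 0 := by linarith
        have hne' : -s + a ≠ 0 := by linarith
        have hsne : s ≠ 0 := hs.ne'
        rw [hp]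
        field_simp
        ring

end Aux

theorem statement10 (d : ℕ) (hd : 2 ≤ d) (n : ℕ)
    {Ω : Type*} [MeasurableSpace Ω] (μ : Measure Ω) [IsProbabilityMeasure μ]
    -- `B 1, …, B n` are independent Beta(1/(d-1), 1) random variables,
    -- i.e. with cumulative distribution function `x ^ (1/(d-1))` on `[0,1]`
    (B : Fin n → Ω → ℝ) (hmeas : ∀ i, Measurable (B i))
    (hindep : ProbabilityTheory.iIndepFun B μ)
    (hdist : ∀ i, ∀ x ∈ Set.Icc (0 : ℝ) 1,
        μ {ω | B i ω ≤ x} = ENNReal.ofReal (x ^ (1 / ((d : ℝ) - 1))))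
    (β : ℝ) (hβ0 : 0 < β) (hβ1 : β ≤ Real.exp (1 - (d : ℝ))) :
    μ {ω | ∏ i, B i ω ≤ β ^ n} ≤
      ENNReal.ofReal
        ((Real.exp 1 * Real.log (1 / β) * β ^ (1 / ((d : ℝ) - 1)) / ((d : ℝ) - 1)) ^ n) := by
  have hd2 : (2:ℝ) ≤ (d:ℝ) := by exact_mod_cast hd
  set e1 : ℝ := (d:ℝ) - 1 with he1def
  have he1 : 1 ≤ e1 := by rw [he1def]; linarith
  have he1' : 0 < e1 := by linarith
  set a : ℝ := 1 / e1 with hadef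
  have ha : 0 < a := by positivity
  set L : ℝ := Real.log (1 / β) with hLdef
  have hlogβ : Real.log β = -L := by
    rw [hLdef, one_div, Real.log_inv, neg_neg]
  have hL : e1 ≤ L := by
    have h1 : Real.log β ≤ 1 - (d:ℝ) := by
      calc Real.log β ≤ Real.log (Real.exp (1 - (d:ℝ))) := Real.log_le_log hβ0 hβ1
        _ = 1 - (d:ℝ) := Real.log_exp _
    have := hlogβ ▸ h1
    rw [he1def]; linarith
  have hL0 : 0 < L := lt_of_lt_of_le he1' hL
  have hLne : L ≠ 0 := hL0.ne'
  set s : ℝ := a - 1 / L with hsdef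
  have hs0 : 0 ≤ s := by
    rw [hsdef, hadef, sub_nonneg]
    exact one_div_le_one_div_of_le he1' hL
  have hsa : s < a := by
    rw [hsdef]
    have : 0 < 1 / L := by positivity
    linarith
  -- the key algebraic identity
  have hβs : β ^ s = Real.exp 1 * β ^ a := by
    have h1 : Real.log β * s = 1 + Real.log β * a := by
      rw [hlogβ, hsdef]; field_simp; ring
    rw [Real.rpow_def_of_pos hβ0 s, Real.rpow_def_of_pos hβ0 a, h1, Real.exp_add]
  have hkey : Real.exp 1 * L * β ^ a / e1 = β ^ s * (a * L) := by
    rw [hβs, hadef]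
    field_simp
  have hra : 0 ≤ β ^ s * (a * L) :=
    mul_nonneg (Real.rpow_nonneg hβ0.le _) (mul_nonneg ha.le hL0.le)
  rw [hkey, ENNReal.ofReal_pow hra]
  rcases hs0.eq_or_lt with hsz | hs
  · -- boundary case: s = 0, the bound is 1
    have haL : a * L = 1 := by
      rw [hsdef] at hsz
      have : a = 1 / L := by linarith
      rw [this]; field_simp
    rw [← hsz, Real.rpow_zero, haL, mul_one, ENNReal.ofReal_one, one_pow]
    exact prob_le_one
  -- main case: 0 < s
  set Y : Fin n → Ω → ENNReal := fun i ω => ENNReal.ofReal (B i ω ^ (-s)) with hYdef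
  have hYm : ∀ i, Measurable (Y i) :=
    fun i => ((hmeas i).pow measurable_const).ennreal_ofReal
  have hYindep : iIndepFun Y μ :=
    hindep.comp (fun _ x => ENNReal.ofReal (x ^ (-s)))
      (fun _ => (measurable_id.pow measurable_const).ennreal_ofReal)
  have hgood : ∀ᵐ ω ∂μ, ∀ i, 0 < B i ω ∧ B i ω ≤ 1 := by
    rw [ae_all_iff]
    intro i
    have hnull : μ {ω | B i ω ≤ 0} = 0 := by
      rw [hdist i 0 ⟨le_refl 0, zero_le_one⟩, Real.zero_rpow ha.ne', ENNReal.ofReal_zero]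
    have hpos : ∀ᵐ ω ∂μ, 0 < B i ω := by
      rw [ae_iff]
      have h : {ω | ¬ 0 < B i ω} = {ω | B i ω ≤ 0} := by ext ω; simp [not_lt]
      rw [h, hnull]
    have hle : ∀ᵐ ω ∂μ, B i ω ≤ 1 := by
      rw [ae_iff]
      have h : {ω | ¬ B i ω ≤ 1} = {ω | B i ω ≤ 1}ᶜ := by ext ω; simp
      rw [h]
      have h1 : μ {ω | B i ω ≤ 1} = 1 := by
        rw [hdist i 1 ⟨zero_le_one, le_refl 1⟩, Real.one_rpow, ENNReal.ofReal_one]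
      exact (prob_compl_eq_zero_iff (measurableSet_le (hmeas i) measurable_const)).mpr h1
    filter_upwards [hpos, hle] with ω h1 h2 using ⟨h1, h2⟩
  set c : ENNReal := ENNReal.ofReal (β ^ (-s)) ^ n with hcdef
  have hβs0 : (0:ℝ) < β ^ (-s) := Real.rpow_pos_of_pos hβ0 _
  have hc0 : c ≠ 0 := pow_ne_zero _ (ENNReal.ofReal_pos.mpr hβs0).ne'
  have hcT : c ≠ ⊤ := ENNReal.pow_ne_top ENNReal.ofReal_ne_top
  -- Markov's inequality step
  have step1 : μ {ω | ∏ i, B i ω ≤ β ^ n} ≤ μ {ω | c ≤ ∏ i, Y i ω} := by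
    apply measure_mono_ae
    filter_upwards [hgood] with ω hω hA
    have hBpos : ∀ i, (0:ℝ) < B i ω := fun i => (hω i).1
    have h1 : ∏ i, Y i ω = ENNReal.ofReal (∏ i, B i ω ^ (-s)) :=
      (ENNReal.ofReal_prod_of_nonneg
        (fun i _ => Real.rpow_nonneg (hBpos i).le _)).symm
    have h2 : ∏ i, B i ω ^ (-s) = (∏ i, B i ω) ^ (-s) :=
      Real.finset_prod_rpow Finset.univ _ (fun i _ => (hBpos i).le) _
    have hprodpos : (0:ℝ) < ∏ i, B i ω := Finset.prod_pos fun i _ => hBpos i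
    have h3 : ((β:ℝ) ^ n) ^ (-s) ≤ (∏ i, B i ω) ^ (-s) :=
      Real.rpow_le_rpow_of_nonpos hprodpos hA (by linarith)
    have h4 : ((β:ℝ) ^ n) ^ (-s) = (β ^ (-s)) ^ n := by
      rw [← Real.rpow_natCast β n, ← Real.rpow_mul hβ0.le, mul_comm,
        Real.rpow_mul hβ0.le, Real.rpow_natCast]
    show c ≤ ∏ i, Y i ω
    rw [h1, h2, hcdef, ← ENNReal.ofReal_pow hβs0.le, ← h4]
    exact ENNReal.ofReal_le_ofReal h3
  have hprodm : Measurable fun ω => ∏ i, Y i ω :=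
    Finset.measurable_prod Finset.univ fun i _ => hYm i
  have step2 : μ {ω | c ≤ ∏ i, Y i ω} ≤ c⁻¹ * ∫⁻ ω, ∏ i, Y i ω ∂μ := by
    have hm := mul_meas_ge_le_lintegral₀ (μ := μ) hprodm.aemeasurable c
    calc μ {ω | c ≤ ∏ i, Y i ω}
        = c⁻¹ * (c * μ {ω | c ≤ ∏ i, Y i ω}) := by
          rw [← mul_assoc, ENNReal.inv_mul_cancel hc0 hcT, one_mul]
      _ ≤ c⁻¹ * ∫⁻ ω, ∏ i, Y i ω ∂μ := mul_le_mul_right hm _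
  have step3 : ∫⁻ ω, ∏ i, Y i ω ∂μ = ∏ i, ∫⁻ ω, Y i ω ∂μ :=
    aux_lintegral_prod_indep μ Y hYm hYindep Finset.univ
  have haL : a / (a - s) = a * L := by
    rw [hsdef, show a - (a - 1/L) = 1/L by ring]
    field_simp
  have step4 : ∀ i, ∫⁻ ω, Y i ω ∂μ ≤ ENNReal.ofReal (a * L) := by
    intro i
    rw [← haL]
    exact aux_moment_bound μ (B i) (hmeas i) ha (hdist i) hs hsa
  have step5 : ∏ i, ∫⁻ ω, Y i ω ∂μ ≤ ENNReal.ofReal (a * L) ^ n := by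
    calc ∏ i, ∫⁻ ω, Y i ω ∂μ ≤ ∏ _i : Fin n, ENNReal.ofReal (a * L) :=
          Finset.prod_le_prod' fun i _ => step4 i
      _ = ENNReal.ofReal (a * L) ^ n := by simp
  have hcinv : c⁻¹ = ENNReal.ofReal (β ^ s) ^ n := by
    rw [hcdef, Real.rpow_neg hβ0.le, ENNReal.ofReal_inv_of_pos
      (Real.rpow_pos_of_pos hβ0 s), ← ENNReal.inv_pow, inv_inv]
  calc μ {ω | ∏ i, B i ω ≤ β ^ n}
      ≤ c⁻¹ * ∫⁻ ω, ∏ i, Y i ω ∂μ := le_trans step1 step2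
    _ = c⁻¹ * ∏ i, ∫⁻ ω, Y i ω ∂μ := by rw [step3]
    _ ≤ c⁻¹ * ENNReal.ofReal (a * L) ^ n := mul_le_mul_right step5 _
    _ = ENNReal.ofReal (β ^ s * (a * L)) ^ n := by
        rw [hcinv, ENNReal.ofReal_mul (Real.rpow_nonneg hβ0.le _), mul_pow]
end

section
/- Let d ≥ 2 be an integer and let λ > 0 be a real number. Then ∫₀¹ (1 − x^{1/λ})^{1/(d−1)} dx < λ^{−1/(d−1)}. -/
open Real intervalIntegral

theorem statement13 (d : ℕ) (hd : 2 ≤ d) (lam : ℝ) (hlam : 0 < lam) :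
    ∫ x in (0 : ℝ)..1, (1 - x ^ (1 / lam)) ^ (1 / ((d : ℝ) - 1)) <
      lam ^ (-(1 / ((d : ℝ) - 1))) := by
  set p : ℝ := 1 / ((d : ℝ) - 1) with hp_def
  have hd1 : (1 : ℝ) ≤ (d : ℝ) - 1 := by
    have : (2 : ℝ) ≤ (d : ℝ) := by exact_mod_cast hd
    linarith
  have hp0 : 0 < p := by positivity
  have hp1 : p ≤ 1 := by
    rw [hp_def, div_le_one (by linarith)]; linarith
  set c : ℝ := 1 / (1 + lam) with hc_def
  have hc0 : 0 < c := by positivity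
  -- pointwise bound: for y ∈ [0,1], y^p ≤ c^p + p * c^(p-1) * (y - c)
  have key : ∀ y : ℝ, 0 ≤ y → y ^ p ≤ c ^ p + p * c ^ (p - 1) * (y - c) := by
    intro y hy
    have hyc : y ^ p = c ^ p * (1 + (y / c - 1)) ^ p := by
      rw [add_sub_cancel, ← Real.mul_rpow hc0.le (by positivity)]
      rw [mul_div_cancel₀ _ hc0.ne']
    rw [hyc]
    have hb : (1 + (y / c - 1)) ^ p ≤ 1 + p * (y / c - 1) := by
      apply rpow_one_add_le_one_add_mul_self _ hp0.le hp1
      have : 0 ≤ y / c := by positivity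
      linarith
    calc c ^ p * (1 + (y / c - 1)) ^ p ≤ c ^ p * (1 + p * (y / c - 1)) := by
          apply mul_le_mul_of_nonneg_left hb (by positivity)
      _ = c ^ p + p * c ^ (p - 1) * (y - c) := by
          have h1 : c ^ p = c ^ (p - 1) * c := by
            rw [← Real.rpow_add_one hc0.ne']; ring_nf
          rw [h1]; field_simp
  -- continuity / integrability
  have hcont : Continuous fun x : ℝ => (1 - x ^ (1 / lam)) ^ p :=
    (Real.continuous_rpow_const hp0.le).comp
      (continuous_const.sub (Real.continuous_rpow_const (by positivity)))
  have hint1 : IntervalIntegrable (fun x : ℝ => (1 - x ^ (1 / lam)) ^ p)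
      MeasureTheory.volume 0 1 := hcont.intervalIntegrable _ _
  have hint2 : IntervalIntegrable
      (fun x : ℝ => c ^ p + p * c ^ (p - 1) * ((1 - x ^ (1 / lam)) - c))
      MeasureTheory.volume 0 1 := by
    exact (continuous_const.add (continuous_const.mul ((continuous_const.sub
      (Real.continuous_rpow_const (by positivity : (0:ℝ) ≤ 1/lam))).sub
      continuous_const))).intervalIntegrable _ _
  -- bound the integral
  have hmono : (∫ x in (0:ℝ)..1, (1 - x ^ (1 / lam)) ^ p) ≤
      ∫ x in (0:ℝ)..1, c ^ p + p * c ^ (p - 1) * ((1 - x ^ (1 / lam)) - c) := by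
    apply intervalIntegral.integral_mono_on (by norm_num) hint1 hint2
    intro x hx
    apply key
    have hx1 : x ^ (1 / lam) ≤ 1 :=
      Real.rpow_le_one hx.1 hx.2 (by positivity)
    linarith
  -- compute the RHS integral
  have hrpow : (∫ x in (0:ℝ)..1, x ^ (1 / lam)) = lam / (1 + lam) := by
    rw [integral_rpow (Or.inl (by linarith [one_div_pos.mpr hlam] : (-1:ℝ) < 1/lam))]
    rw [Real.one_rpow, Real.zero_rpow (by positivity : (0:ℝ) < 1/lam + 1).ne']
    field_simp
    norm_num
  have hcomp : (∫ x in (0:ℝ)..1, c ^ p + p * c ^ (p - 1) * ((1 - x ^ (1 / lam)) - c))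
      = c ^ p := by
    have : (fun x : ℝ => c ^ p + p * c ^ (p - 1) * ((1 - x ^ (1 / lam)) - c))
        = fun x : ℝ => (c ^ p + p * c ^ (p - 1) * (1 - c)) - p * c ^ (p - 1) * x ^ (1 / lam) := by
      funext x; ring
    rw [this]
    rw [intervalIntegral.integral_sub (f := fun _ : ℝ => c ^ p + p * c ^ (p - 1) * (1 - c))
      (g := fun x : ℝ => p * c ^ (p - 1) * x ^ (1 / lam)) (intervalIntegrable_const)
      ((continuous_const.mul (Real.continuous_rpow_const
        (by positivity : (0:ℝ) ≤ 1/lam))).intervalIntegrable 0 1 :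
        IntervalIntegrable (fun x : ℝ => p * c ^ (p - 1) * x ^ (1 / lam)) MeasureTheory.volume 0 1)]
    rw [intervalIntegral.integral_const_mul, hrpow, intervalIntegral.integral_const]
    have h1c : 1 - c = lam / (1 + lam) := by rw [hc_def]; field_simp; ring
    rw [h1c]
    simp only [smul_eq_mul, sub_zero, one_mul]
    ring
  -- final strict inequality
  have hfin : c ^ p < lam ^ (-p) := by
    rw [Real.rpow_neg hlam.le, ← Real.inv_rpow hlam.le]
    apply Real.rpow_lt_rpow hc0.le _ hp0
    rw [hc_def, div_lt_iff₀ (by linarith), inv_mul_eq_div, lt_div_iff₀ hlam]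
    nlinarith
  calc (∫ x in (0:ℝ)..1, (1 - x ^ (1 / lam)) ^ p) ≤ _ := hmono
    _ = c ^ p := hcomp
    _ < lam ^ (-p) := hfin
end

section
/- Let r < d be positive integers with d ≥ 2. Let (B₁,…,B_d) be a Dirichlet(1/(d−1),…,1/(d−1)) random vector of length d and set Υ = min{B_{i₁}+B_{i₂}+⋯+B_{i_{d−r}} : 1 ≤ i₁ < i₂ < ⋯ < i_{d−r} ≤ d}. Then for every ε with 0 ≤ ε ≤ d−r, P(Υ ≤ ε) ≤ d·(ε/(d−r))^{1/(d−1)}. -/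
open MeasureTheory ProbabilityTheory

section Aux14proofs
namespace Aux14

open Real Set
open scoped ENNReal NNReal

lemma beta_integrable {a b z : ℝ} (ha : 0 < a) (hb : 0 < b) (hz : 0 < z) :
    IntervalIntegrable (fun x => x ^ (a-1) * (z - x) ^ (b-1)) volume 0 z := by
  have h1 : IntervalIntegrable (fun x => x ^ (a-1) * (z - x) ^ (b-1)) volume 0 (z/2) := by
    apply IntervalIntegrable.mul_continuousOn
    · exact intervalIntegral.intervalIntegrable_rpow' (by linarith)
    · apply ContinuousOn.rpow_const (continuous_const.sub continuous_id).continuousOn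
      intro x hx
      rw [Set.uIcc_of_le (by linarith)] at hx
      left
      simp only [Pi.sub_apply, id]
      intro h
      nlinarith [hx.1, hx.2]
  have h2 : IntervalIntegrable (fun x => x ^ (a-1) * (z - x) ^ (b-1)) volume (z/2) z := by
    apply IntervalIntegrable.continuousOn_mul
    · have h0 : IntervalIntegrable (fun x : ℝ => x ^ (b-1)) volume 0 (z/2) :=
        intervalIntegral.intervalIntegrable_rpow' (by linarith)
      have := h0.comp_sub_left z
      -- integrable on (z-0)..(z-z/2) = z..z/2
      have h3 : z - z / 2 = z/2 := by ring
      rw [h3] at this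
      simpa using this.symm
    · apply ContinuousOn.rpow_const continuousOn_id
      intro x hx
      rw [Set.uIcc_of_le (by linarith)] at hx
      left
      simp only [id]
      intro h
      nlinarith [hx.1, hx.2]
  exact h1.trans h2


lemma beta_integral_eq {a b z : ℝ} (ha : 0 < a) (hb : 0 < b) (hz : 0 < z) :
    ∫ x in (0:ℝ)..z, x ^ (a-1) * (z - x) ^ (b-1)
      = Real.Gamma a * Real.Gamma b / Real.Gamma (a+b) * z ^ (a+b-1) := by
  have hc : (∫ x in (0:ℝ)..z, ((x:ℂ) ^ ((a:ℂ)-1) * ((z:ℂ) - (x:ℂ)) ^ ((b:ℂ)-1)))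
      = (z:ℂ) ^ ((a:ℂ)+(b:ℂ)-1) * Complex.betaIntegral a b :=
    Complex.betaIntegral_scaled (a:ℂ) (b:ℂ) hz
  have hre : (∫ x in (0:ℝ)..z, ((x:ℂ) ^ ((a:ℂ)-1) * ((z:ℂ) - (x:ℂ)) ^ ((b:ℂ)-1)))
      = ((∫ x in (0:ℝ)..z, x ^ (a-1) * (z - x) ^ (b-1) : ℝ) : ℂ) := by
    rw [← intervalIntegral.integral_ofReal]
    apply intervalIntegral.integral_congr_ae
    filter_upwards with x hx
    rw [Set.uIoc_of_le hz.le] at hx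
    have hx0 : (0:ℝ) ≤ x := hx.1.le
    have hzx : (0:ℝ) ≤ z - x := by linarith [hx.2]
    rw [Complex.ofReal_mul, Complex.ofReal_cpow hx0, Complex.ofReal_cpow hzx]
    push_cast
    ring
  have hG : Complex.Gamma a * Complex.Gamma b
      = Complex.Gamma ((a:ℂ)+(b:ℂ)) * Complex.betaIntegral a b := by
    simpa using Complex.Gamma_mul_Gamma_eq_betaIntegral
      (s := (a:ℂ)) (t := (b:ℂ)) (by simpa using ha) (by simpa using hb)
  have hGab : Real.Gamma (a+b) ≠ 0 := (Real.Gamma_pos_of_pos (by linarith)).ne'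
  have hab : ((a:ℂ)+(b:ℂ)) = ((a+b:ℝ):ℂ) := by push_cast; ring
  rw [hab, Complex.Gamma_ofReal, Complex.Gamma_ofReal, Complex.Gamma_ofReal] at hG
  have h1 : ((Real.Gamma (a+b):ℝ):ℂ) ≠ 0 := by exact_mod_cast hGab
  have hbeta : Complex.betaIntegral a b
      = ((Real.Gamma a * Real.Gamma b / Real.Gamma (a+b) : ℝ) : ℂ) := by
    rw [Complex.ofReal_div, eq_div_iff h1, Complex.ofReal_mul, mul_comm]
    exact hG.symm
  have hzc : ((z:ℂ)) ^ ((a:ℂ)+(b:ℂ)-1) = ((z ^ (a+b-1) : ℝ) : ℂ) := by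
    rw [Complex.ofReal_cpow hz.le]
    push_cast
    ring_nf
  have key : ((∫ x in (0:ℝ)..z, x ^ (a-1) * (z - x) ^ (b-1) : ℝ) : ℂ)
      = ((Real.Gamma a * Real.Gamma b / Real.Gamma (a+b) * z ^ (a+b-1) : ℝ) : ℂ) := by
    rw [← hre, hc, hzc, hbeta]
    push_cast
    ring
  exact_mod_cast key


lemma gammaPDF_conv {a b : ℝ} (ha : 0 < a) (hb : 0 < b) {z : ℝ} (hz : z ≠ 0) :
    ∫⁻ x, gammaPDF a 1 x * gammaPDF b 1 (z - x) = gammaPDF (a+b) 1 z := by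
  rcases hz.lt_or_gt with hneg | hpos
  · have h0 : ∀ x : ℝ, gammaPDF a 1 x * gammaPDF b 1 (z - x) = 0 := by
      intro x
      rcases lt_or_ge x 0 with h | h
      · rw [gammaPDF_of_neg h, zero_mul]
      · rw [gammaPDF_of_neg (by linarith : z - x < 0), mul_zero]
    simp only [h0, lintegral_zero, gammaPDF_of_neg hneg]
  · set g : ℝ → ℝ :=
      fun x => Real.exp (-z) / (Real.Gamma a * Real.Gamma b) * (x ^ (a-1) * (z - x) ^ (b-1))
      with hg
    have hGa := Real.Gamma_pos_of_pos ha
    have hGb := Real.Gamma_pos_of_pos hb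
    have key : ∀ x, gammaPDF a 1 x * gammaPDF b 1 (z - x)
        = (Icc (0:ℝ) z).indicator (fun x => ENNReal.ofReal (g x)) x := by
      intro x
      by_cases hx : x ∈ Icc (0:ℝ) z
      · rw [indicator_of_mem hx, gammaPDF_of_nonneg hx.1,
          gammaPDF_of_nonneg (by linarith [hx.2] : (0:ℝ) ≤ z - x),
          ← ENNReal.ofReal_mul (mul_nonneg (mul_nonneg (by positivity)
            (Real.rpow_nonneg hx.1 _)) (Real.exp_nonneg _))]
        congr 1
        rw [hg]
        simp only [one_rpow, one_mul]
        have hexp : Real.exp (-x) * Real.exp (-(z - x)) = Real.exp (-z) := by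
          rw [← Real.exp_add]; ring_nf
        field_simp
        linear_combination x ^ (a - 1) * (z - x) ^ (b - 1) * hexp
      · rw [indicator_of_notMem hx]
        simp only [mem_Icc, not_and_or, not_le] at hx
        rcases hx with h | h
        · rw [gammaPDF_of_neg h, zero_mul]
        · rw [gammaPDF_of_neg (by linarith : z - x < 0), mul_zero]
    calc ∫⁻ x, gammaPDF a 1 x * gammaPDF b 1 (z - x)
        = ∫⁻ x in Icc (0:ℝ) z, ENNReal.ofReal (g x) := by
          simp_rw [key]
          exact lintegral_indicator measurableSet_Icc _
      _ = ENNReal.ofReal (∫ x in Icc (0:ℝ) z, g x) := by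
          rw [← ofReal_integral_eq_lintegral_ofReal]
          · have h1 : IntegrableOn (fun x => x ^ (a-1) * (z - x) ^ (b-1)) (Icc (0:ℝ) z) := by
              rw [integrableOn_Icc_iff_integrableOn_Ioc]
              exact (intervalIntegrable_iff_integrableOn_Ioc_of_le hpos.le).mp
                (beta_integrable ha hb hpos)
            exact (h1.const_mul _)
          · refine (ae_restrict_iff' measurableSet_Icc).2 (ae_of_all _ fun x hx => ?_)
            have h1 : (0:ℝ) ≤ x := hx.1
            have h2 : (0:ℝ) ≤ z - x := by linarith [hx.2]
            positivity
      _ = gammaPDF (a+b) 1 z := by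
          rw [hg]
          rw [MeasureTheory.integral_Icc_eq_integral_Ioc,
            ← intervalIntegral.integral_of_le hpos.le,
            intervalIntegral.integral_const_mul, beta_integral_eq ha hb hpos,
            gammaPDF_of_nonneg hpos.le]
          congr 1
          rw [one_rpow, one_mul]
          have hGab := Real.Gamma_pos_of_pos (by linarith : (0:ℝ) < a + b)
          field_simp


lemma measurable_gammaPDF (a r : ℝ) : Measurable (gammaPDF a r) :=
  (measurable_gammaPDFReal a r).ennreal_ofReal

lemma gammaMeasure_conv {a b : ℝ} (ha : 0 < a) (hb : 0 < b) :
    Measure.map (fun p : ℝ × ℝ => p.1 + p.2)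
      ((gammaMeasure a 1).prod (gammaMeasure b 1)) = gammaMeasure (a+b) 1 := by
  haveI hpa : IsProbabilityMeasure (gammaMeasure a 1) := isProbabilityMeasure_gammaMeasure ha one_pos
  haveI hpb : IsProbabilityMeasure (gammaMeasure b 1) := isProbabilityMeasure_gammaMeasure hb one_pos
  have hma := measurable_gammaPDF a 1
  have hmb := measurable_gammaPDF b 1
  ext s hs
  have hsadd : MeasurableSet ((fun p : ℝ × ℝ => p.1 + p.2) ⁻¹' s) := hs.preimage measurable_add
  rw [Measure.map_apply measurable_add hs, Measure.prod_apply hsadd]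
  -- inner measure as a shifted lintegral
  have inner : ∀ x : ℝ, gammaMeasure b 1 (Prod.mk x ⁻¹' ((fun p : ℝ × ℝ => p.1 + p.2) ⁻¹' s))
      = ∫⁻ z, s.indicator (fun _ => (1:ℝ≥0∞)) z * gammaPDF b 1 (z - x) := by
    intro x
    have hxs : MeasurableSet {y : ℝ | x + y ∈ s} := hs.preimage (measurable_const_add x)
    have hps : Prod.mk x ⁻¹' ((fun p : ℝ × ℝ => p.1 + p.2) ⁻¹' s) = {y : ℝ | x + y ∈ s} := rfl
    rw [hps, gammaMeasure, withDensity_apply _ hxs, ← lintegral_indicator hxs]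
    have hpt : ∀ y : ℝ, ({y : ℝ | x + y ∈ s}).indicator (gammaPDF b 1) y
        = (fun z => s.indicator (fun _ => (1:ℝ≥0∞)) z * gammaPDF b 1 (z - x)) (x + y) := by
      intro y
      by_cases h : x + y ∈ s
      · simp only [indicator_of_mem (show y ∈ {y : ℝ | x + y ∈ s} from h),
          indicator_of_mem h, one_mul, add_sub_cancel_left]
      · simp only [indicator_of_notMem (show y ∉ {y : ℝ | x + y ∈ s} from h),
          indicator_of_notMem h, zero_mul]
    simp_rw [hpt]
    exact lintegral_add_left_eq_self
      (fun z => s.indicator (fun _ => (1:ℝ≥0∞)) z * gammaPDF b 1 (z - x)) x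
  have hindmeas : Measurable (s.indicator (fun _ : ℝ => (1:ℝ≥0∞))) :=
    measurable_const.indicator hs
  have hindlt : ∀ z : ℝ, s.indicator (fun _ : ℝ => (1:ℝ≥0∞)) z ≠ ⊤ := by
    intro z; by_cases h : z ∈ s <;> simp [h]
  have hmeasg : Measurable fun x : ℝ =>
      gammaMeasure b 1 (Prod.mk x ⁻¹' ((fun p : ℝ × ℝ => p.1 + p.2) ⁻¹' s)) :=
    measurable_measure_prodMk_left hsadd
  rw [show (gammaMeasure a 1) = volume.withDensity (gammaPDF a 1) from rfl,
    lintegral_withDensity_eq_lintegral_mul _ hma hmeasg]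
  simp only [Pi.mul_apply]
  calc ∫⁻ x, gammaPDF a 1 x *
        gammaMeasure b 1 (Prod.mk x ⁻¹' ((fun p : ℝ × ℝ => p.1 + p.2) ⁻¹' s))
      = ∫⁻ x, ∫⁻ z, gammaPDF a 1 x *
          (s.indicator (fun _ => (1:ℝ≥0∞)) z * gammaPDF b 1 (z - x)) := by
        refine lintegral_congr fun x => ?_
        rw [inner x, ← lintegral_const_mul' (gammaPDF a 1 x) _ (show gammaPDF a 1 x ≠ ⊤ from ENNReal.ofReal_ne_top)]
    _ = ∫⁻ z, ∫⁻ x, gammaPDF a 1 x *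
          (s.indicator (fun _ => (1:ℝ≥0∞)) z * gammaPDF b 1 (z - x)) := by
        apply lintegral_lintegral_swap
        apply Measurable.aemeasurable
        exact (hma.comp measurable_fst).mul
          ((hindmeas.comp measurable_snd).mul
            (hmb.comp (measurable_snd.sub measurable_fst)))
    _ = ∫⁻ z, s.indicator (fun _ => (1:ℝ≥0∞)) z *
          ∫⁻ x, gammaPDF a 1 x * gammaPDF b 1 (z - x) := by
        refine lintegral_congr fun z => ?_
        rw [← lintegral_const_mul' _ _ (hindlt z)]
        refine lintegral_congr fun x => ?_
        ring
    _ = ∫⁻ z, s.indicator (fun _ => (1:ℝ≥0∞)) z * gammaPDF (a+b) 1 z := by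
        refine lintegral_congr_ae ?_
        filter_upwards [compl_mem_ae_iff.2 (measure_singleton (0:ℝ))] with z hz
        rw [gammaPDF_conv ha hb (show z ≠ 0 from hz)]
    _ = gammaMeasure (a+b) 1 s := by
        rw [gammaMeasure, withDensity_apply _ hs, ← lintegral_indicator hs]
        refine lintegral_congr fun z => ?_
        by_cases h : z ∈ s <;> simp [h]


variable {Ω : Type*} [MeasurableSpace Ω] {μ : Measure Ω} [IsProbabilityMeasure μ]

lemma map_add_gamma {X Y : Ω → ℝ} (hX : Measurable X) (hY : Measurable Y)
    (h : IndepFun X Y μ) {a b : ℝ} (ha : 0 < a) (hb : 0 < b)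
    (hmX : μ.map X = gammaMeasure a 1) (hmY : μ.map Y = gammaMeasure b 1) :
    μ.map (fun ω => X ω + Y ω) = gammaMeasure (a+b) 1 := by
  have hmap : μ.map (fun ω => (X ω, Y ω)) = (μ.map X).prod (μ.map Y) :=
    (indepFun_iff_map_prod_eq_prod_map_map hX.aemeasurable hY.aemeasurable).1 h
  have hcomp : (fun ω => X ω + Y ω)
      = (fun p : ℝ × ℝ => p.1 + p.2) ∘ (fun ω => (X ω, Y ω)) := rfl
  rw [hcomp, ← Measure.map_map measurable_add (hX.prodMk hY), hmap, hmX, hmY,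
    gammaMeasure_conv ha hb]

lemma map_sum_gamma {d : ℕ} {G : Fin d → Ω → ℝ} (hGmeas : ∀ i, Measurable (G i))
    (hGindep : iIndepFun G μ) {γ : ℝ} (hγ : 0 < γ)
    (hGdist : ∀ i, μ.map (G i) = gammaMeasure γ 1) (s : Finset (Fin d)) (hs : s.Nonempty) :
    μ.map (fun ω => ∑ j ∈ s, G j ω) = gammaMeasure (s.card * γ) 1 := by
  induction hs using Finset.Nonempty.cons_induction with
  | singleton i => simpa using hGdist i
  | cons i s hi hs ih =>
      have hsum : Measurable (fun ω => ∑ j ∈ s, G j ω) :=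
        Finset.measurable_sum s (fun j _ => hGmeas j)
      have hind : IndepFun (G i) (fun ω => ∑ j ∈ s, G j ω) μ := by
        have h0 := (hGindep.indepFun_finset_sum_of_notMem hGmeas hi).symm
        have hfe : (∑ j ∈ s, G j) = fun ω => ∑ j ∈ s, G j ω := by
          funext ω; simp [Finset.sum_apply]
        rwa [hfe] at h0
      have : μ.map (fun ω => ∑ j ∈ Finset.cons i s hi, G j ω)
          = μ.map (fun ω => G i ω + ∑ j ∈ s, G j ω) := by
        congr 1; ext ω; rw [Finset.sum_cons]
      rw [this, map_add_gamma (hGmeas i) hsum hind hγ (by positivity) (hGdist i) ih]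
      congr 1
      push_cast [Finset.card_cons]
      ring


/-- survival function of the Exp(1) = Gamma(1,1) distribution -/
lemma gamma_one_Ici {c : ℝ} (hc : 0 ≤ c) :
    gammaMeasure 1 1 (Ici c) = ENNReal.ofReal (Real.exp (-c)) := by
  rw [gammaMeasure, withDensity_apply _ measurableSet_Ici]
  have h1 : ∀ᵐ y ∂(volume.restrict (Ici c)), gammaPDF 1 1 y = ENNReal.ofReal (Real.exp (-y)) := by
    refine (ae_restrict_iff' measurableSet_Ici).2 (ae_of_all _ fun y hy => ?_)
    have hy0 : (0:ℝ) ≤ y := le_trans hc hy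
    rw [gammaPDF_of_nonneg hy0]
    norm_num [Real.Gamma_one, Real.rpow_zero, Real.one_rpow]
  rw [lintegral_congr_ae h1, ← ofReal_integral_eq_lintegral_ofReal]
  · rw [integral_Ici_eq_integral_Ioi, integral_exp_neg_Ioi]
  · rw [← IntegrableOn, integrableOn_Ici_iff_integrableOn_Ioi]
    simpa using exp_neg_integrableOn_Ioi c one_pos
  · exact ae_of_all _ fun y => (Real.exp_pos _).le

/-- Laplace transform of the Gamma(γ,1) distribution -/
lemma gamma_laplace {γ s : ℝ} (hγ : 0 < γ) (hs : 0 ≤ s) :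
    ∫⁻ x, ENNReal.ofReal (Real.exp (-(s * x))) ∂(gammaMeasure γ 1)
      = ENNReal.ofReal ((1+s) ^ (-γ)) := by
  have h1s : (0:ℝ) < 1 + s := by linarith
  rw [gammaMeasure, lintegral_withDensity_eq_lintegral_mul _
    (measurable_gammaPDF γ 1)
    (by fun_prop)]
  have key : ∀ x : ℝ, (gammaPDF γ 1 * fun x => ENNReal.ofReal (Real.exp (-(s * x)))) x
      = ENNReal.ofReal ((1+s) ^ (-γ)) * gammaPDF γ (1+s) x := by
    intro x
    simp only [Pi.mul_apply]
    rcases lt_or_ge x 0 with hx | hx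
    · rw [gammaPDF_of_neg hx, gammaPDF_of_neg hx, zero_mul, mul_zero]
    · rw [gammaPDF_of_nonneg hx, gammaPDF_of_nonneg hx,
        ← ENNReal.ofReal_mul (by positivity), ← ENNReal.ofReal_mul (by positivity)]
      congr 1
      have hexp : Real.exp (-(1*x)) * Real.exp (-(s*x)) = Real.exp (-((1+s)*x)) := by
        rw [← Real.exp_add]; ring_nf
      have hG := Real.Gamma_pos_of_pos hγ
      have hpow : (1+s) ^ (-γ) * (1+s) ^ γ = 1 := by
        rw [← Real.rpow_add h1s]; norm_num
      rw [one_rpow]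
      linear_combination (x ^ (γ-1) / Real.Gamma γ) * hexp
        - (x ^ (γ-1) * Real.exp (-((1+s)*x)) / Real.Gamma γ) * hpow
  simp_rw [key]
  rw [lintegral_const_mul' _ _ ENNReal.ofReal_ne_top, lintegral_gammaPDF_eq_one hγ h1s, mul_one]


lemma gammaMeasure_Iic_zero {a r : ℝ} : gammaMeasure a r (Iic 0) = 0 := by
  rw [gammaMeasure, withDensity_apply _ measurableSet_Iic,
    show Iic (0:ℝ) = Iio 0 ∪ {0} from (Set.Iio_union_right).symm,
    lintegral_union (measurableSet_singleton 0) (Set.disjoint_singleton_right.mpr (by simp))]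
  rw [lintegral_gammaPDF_of_nonpos le_rfl,
    setLIntegral_measure_zero _ _ (measure_singleton 0), add_zero]

section Marginal

variable {d : ℕ} {G : Fin d → Ω → ℝ} {B : Fin d → Ω → ℝ}

lemma marginal_bound (hd : 2 ≤ d) (hGmeas : ∀ i, Measurable (G i))
    (hGindep : iIndepFun G μ)
    (hGdist : ∀ i, μ.map (G i) = gammaMeasure (1 / ((d : ℝ) - 1)) 1)
    (hB : ∀ i ω, B i ω = G i ω / ∑ j, G j ω)
    (i : Fin d) {t : ℝ} (ht0 : 0 ≤ t) (ht1 : t < 1) :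
    μ {ω | B i ω ≤ t} ≤ ENNReal.ofReal (t ^ (1 / ((d : ℝ) - 1))) := by
  set γ : ℝ := 1 / ((d : ℝ) - 1) with hγdef
  have hd1 : (0:ℝ) < (d : ℝ) - 1 := by
    have : (2:ℝ) ≤ (d:ℝ) := by exact_mod_cast hd
    linarith
  have hγ : 0 < γ := by positivity
  -- the null set where some G j is nonpositive
  set N : Set Ω := ⋃ j, {ω | G j ω ≤ 0} with hN
  have hnull : μ N = 0 := by
    refine le_antisymm (le_trans (measure_iUnion_le _) ?_) (zero_le)
    have hj : ∀ j : Fin d, μ {ω | G j ω ≤ 0} = 0 := by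
      intro j
      have h1 : {ω | G j ω ≤ 0} = G j ⁻¹' (Iic 0) := rfl
      rw [h1, ← Measure.map_apply (hGmeas j) measurableSet_Iic, hGdist j,
        gammaMeasure_Iic_zero]
    simp [hj]
  have hNout : ∀ ω, ω ∉ N → (∀ j, 0 < G j ω) := by
    intro ω hω j
    by_contra h
    exact hω (Set.mem_iUnion.2 ⟨j, not_lt.1 h⟩)
  rcases eq_or_lt_of_le ht0 with rfl | ht
  · -- t = 0
    have hsub : {ω | B i ω ≤ 0} ⊆ N := by
      intro ω hω
      by_contra hωN
      have hpos := hNout ω hωN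
      have hS : 0 < ∑ j, G j ω := Finset.sum_pos (fun j _ => hpos j) ⟨i, Finset.mem_univ i⟩
      have : 0 < B i ω := by rw [hB i ω]; exact div_pos (hpos i) hS
      exact absurd hω (by simp only [Set.mem_setOf_eq]; linarith)
    calc μ {ω | B i ω ≤ 0} ≤ μ N := measure_mono hsub
      _ = 0 := hnull
      _ ≤ _ := zero_le
  · -- 0 < t
    set T : Ω → ℝ := fun ω => ∑ j ∈ Finset.univ.erase i, G j ω with hT
    have hTmeas : Measurable T := Finset.measurable_sum _ (fun j _ => hGmeas j)
    have herase_ne : (Finset.univ.erase i).Nonempty := by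
      rw [← Finset.card_pos, Finset.card_erase_of_mem (Finset.mem_univ i), Finset.card_univ,
        Fintype.card_fin]
      omega
    have hTdist : μ.map T = gammaMeasure 1 1 := by
      rw [hT, map_sum_gamma hGmeas hGindep hγ hGdist _ herase_ne]
      congr 1
      rw [Finset.card_erase_of_mem (Finset.mem_univ i), Finset.card_univ, Fintype.card_fin]
      rw [hγdef]
      rw [Nat.cast_sub (by omega : 1 ≤ d), Nat.cast_one]
      field_simp
    set Sset : Set (ℝ × ℝ) := {p : ℝ × ℝ | (1-t) * p.1 ≤ t * p.2} with hSsetdef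
    have hSset : MeasurableSet Sset := measurableSet_le (by fun_prop) (by fun_prop)
    set A : Set Ω := {ω | (1-t) * G i ω ≤ t * T ω} with hA
    have hsub : {ω | B i ω ≤ t} ⊆ A ∪ N := by
      intro ω hω
      by_cases hωN : ω ∈ N
      · exact Or.inr hωN
      refine Or.inl ?_
      have hpos := hNout ω hωN
      have hS : 0 < ∑ j, G j ω := Finset.sum_pos (fun j _ => hpos j) ⟨i, Finset.mem_univ i⟩
      have hBle : G i ω / ∑ j, G j ω ≤ t := by rw [← hB i ω]; exact hω
      have h1 : G i ω ≤ t * ∑ j, G j ω := by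
        rw [div_le_iff₀ hS] at hBle; linarith [hBle]
      have h2 : G i ω + T ω = ∑ j, G j ω :=
        Finset.add_sum_erase Finset.univ (fun j => G j ω) (Finset.mem_univ i)
      simp only [hA, Set.mem_setOf_eq]
      nlinarith [h1, h2]
    have hApre : A = (fun ω => (G i ω, T ω)) ⁻¹' Sset := rfl
    have hpairmeas : Measurable (fun ω => (G i ω, T ω)) := (hGmeas i).prodMk hTmeas
    have hind : IndepFun (G i) T μ := by
      have h0 := (hGindep.indepFun_finset_sum_of_notMem hGmeas
        (Finset.notMem_erase i Finset.univ)).symm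
      have hfe : (∑ j ∈ Finset.univ.erase i, G j) = T := by
        funext ω; simp [hT, Finset.sum_apply]
      rwa [hfe] at h0
    have hpair : μ.map (fun ω => (G i ω, T ω))
        = (gammaMeasure γ 1).prod (gammaMeasure 1 1) := by
      rw [(indepFun_iff_map_prod_eq_prod_map_map (hGmeas i).aemeasurable
        hTmeas.aemeasurable).1 hind, hGdist i, hTdist]
    haveI : IsProbabilityMeasure (gammaMeasure 1 1) := isProbabilityMeasure_gammaMeasure one_pos one_pos
    set s : ℝ := (1-t)/t with hsdef
    have hs : 0 ≤ s := by
      have h1 : (0:ℝ) ≤ 1 - t := by linarith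
      positivity
    have hbound : ∀ x : ℝ, gammaMeasure 1 1 (Prod.mk x ⁻¹' Sset)
        ≤ ENNReal.ofReal (Real.exp (-(s * x))) := by
      intro x
      have h1t : (0:ℝ) ≤ 1 - t := by linarith
      rcases le_or_gt 0 x with hx | hx
      · have hpre : Prod.mk x ⁻¹' Sset = Ici ((1-t) * x / t) := by
          ext y
          simp only [hSsetdef, Set.mem_preimage, Set.mem_setOf_eq, Set.mem_Ici]
          rw [div_le_iff₀ ht]
          constructor <;> intro h <;> linarith [h]
        rw [hpre, gamma_one_Ici (by positivity)]
        apply le_of_eq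
        congr 1
        rw [hsdef]; ring_nf
      · calc gammaMeasure 1 1 (Prod.mk x ⁻¹' Sset) ≤ 1 := prob_le_one
          _ = ENNReal.ofReal (Real.exp 0) := by simp
          _ ≤ ENNReal.ofReal (Real.exp (-(s * x))) := by
              apply ENNReal.ofReal_le_ofReal
              apply Real.exp_le_exp.2
              nlinarith [hs, hx]
    calc μ {ω | B i ω ≤ t} ≤ μ (A ∪ N) := measure_mono hsub
      _ ≤ μ A + μ N := measure_union_le _ _
      _ = μ A := by rw [hnull, add_zero]
      _ = (gammaMeasure γ 1).prod (gammaMeasure 1 1) Sset := by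
          rw [hApre, ← Measure.map_apply hpairmeas hSset, hpair]
      _ = ∫⁻ x, gammaMeasure 1 1 (Prod.mk x ⁻¹' Sset) ∂(gammaMeasure γ 1) :=
          Measure.prod_apply hSset
      _ ≤ ∫⁻ x, ENNReal.ofReal (Real.exp (-(s * x))) ∂(gammaMeasure γ 1) :=
          lintegral_mono hbound
      _ = ENNReal.ofReal ((1+s) ^ (-γ)) := gamma_laplace hγ hs
      _ = ENNReal.ofReal (t ^ γ) := by
          congr 1
          rw [hsdef, show 1 + (1-t)/t = t⁻¹ by field_simp; ring,
            Real.inv_rpow ht0 (-γ), Real.rpow_neg ht0, inv_inv]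


end Marginal

end Aux14
end Aux14proofs

open scoped ENNReal

theorem statement14 (d r : ℕ) (hr : 0 < r) (hrd : r < d) (hd : 2 ≤ d)
    {Ω : Type*} [MeasurableSpace Ω] (μ : Measure Ω) [IsProbabilityMeasure μ]
    -- the Dirichlet(1/(d-1), …, 1/(d-1)) vector `B`, built from d i.i.d.
    -- Gamma(1/(d-1), 1) random variables
    (G : Fin d → Ω → ℝ) (hGmeas : ∀ i, Measurable (G i))
    (hGindep : ProbabilityTheory.iIndepFun G μ)
    (hGdist : ∀ i, Measure.map (G i) μ =
      ProbabilityTheory.gammaMeasure (1 / ((d : ℝ) - 1)) 1)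
    (B : Fin d → Ω → ℝ) (hB : ∀ i ω, B i ω = G i ω / ∑ j, G j ω)
    -- `Υ = min {B i₁ + ⋯ + B i_{d-r} : 1 ≤ i₁ < ⋯ < i_{d-r} ≤ d}`
    (Υ : Ω → ℝ) (hΥ : ∀ ω, Υ ω = minSum d (d - r) (fun i => B i ω))
    (ε : ℝ) (hε0 : 0 ≤ ε) (hε1 : ε ≤ (d : ℝ) - (r : ℝ)) :
    μ {ω | Υ ω ≤ ε} ≤
      ENNReal.ofReal ((d : ℝ) * (ε / ((d : ℝ) - (r : ℝ))) ^ (1 / ((d : ℝ) - 1))) := by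
  have hd1 : (0:ℝ) < (d:ℝ) - 1 := by
    have : (2:ℝ) ≤ (d:ℝ) := by exact_mod_cast hd
    linarith
  have hdr : (0:ℝ) < (d:ℝ) - (r:ℝ) := by
    have : (r:ℝ) < (d:ℝ) := by exact_mod_cast hrd
    linarith
  set t : ℝ := ε / ((d:ℝ) - (r:ℝ)) with htdef
  have ht0 : 0 ≤ t := div_nonneg hε0 hdr.le
  have ht1 : t ≤ 1 := (div_le_one hdr).2 hε1
  by_cases htriv : 1 ≤ (d:ℝ) * t ^ (1/((d:ℝ)-1))
  · calc μ {ω | Υ ω ≤ ε} ≤ 1 := prob_le_one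
      _ = ENNReal.ofReal 1 := by norm_num
      _ ≤ _ := ENNReal.ofReal_le_ofReal htriv
  · push_neg at htriv
    have htlt1 : t < 1 := by
      rcases eq_or_lt_of_le ht1 with h | h
      · exfalso
        rw [h, Real.one_rpow, mul_one] at htriv
        have : (2:ℝ) ≤ (d:ℝ) := by exact_mod_cast hd
        linarith
      · exact h
    have hεt : ε = ((d:ℝ) - (r:ℝ)) * t := by
      rw [htdef]; field_simp
    have hsub : {ω | Υ ω ≤ ε} ⊆ ⋃ i, {ω | B i ω ≤ t} := by
      intro ω hω
      simp only [Set.mem_setOf_eq] at hω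
      rw [hΥ ω, minSum] at hω
      set E : Set ℝ := {x | ∃ S : Finset (Fin d), S.card = d - r ∧ x = ∑ i ∈ S, B i ω} with hE
      have hfin : E.Finite := by
        have hsub2 : E ⊆ (fun S : Finset (Fin d) => ∑ i ∈ S, B i ω) '' Set.univ := by
          rintro x ⟨S, _, rfl⟩; exact ⟨S, trivial, rfl⟩
        exact ((Set.finite_univ).image _).subset hsub2
      have hne : E.Nonempty := by
        obtain ⟨S, _, hScard⟩ := Finset.exists_subset_card_eq (s := (Finset.univ : Finset (Fin d)))
          (n := d - r) (by simp)
        exact ⟨∑ i ∈ S, B i ω, S, hScard, rfl⟩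
      obtain ⟨S, hcard, hx⟩ := hne.csInf_mem hfin
      have hsumle : ∑ i ∈ S, B i ω ≤ ε := by rw [← hx]; exact hω
      have hSne : S.Nonempty := by rw [← Finset.card_pos, hcard]; omega
      have hcast : ((S.card : ℕ) : ℝ) = (d:ℝ) - (r:ℝ) := by
        rw [hcard]; push_cast [Nat.cast_sub hrd.le]; ring
      have hsum2 : ∑ i ∈ S, B i ω ≤ ∑ _i ∈ S, t := by
        rw [Finset.sum_const, nsmul_eq_mul, hcast, ← hεt]
        exact hsumle
      obtain ⟨i, _, hit⟩ := Finset.exists_le_of_sum_le hSne hsum2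
      exact Set.mem_iUnion.2 ⟨i, hit⟩
    calc μ {ω | Υ ω ≤ ε} ≤ μ (⋃ i, {ω | B i ω ≤ t}) := measure_mono hsub
      _ ≤ ∑' i : Fin d, μ {ω | B i ω ≤ t} := measure_iUnion_le _
      _ = ∑ i : Fin d, μ {ω | B i ω ≤ t} := tsum_fintype _
      _ ≤ ∑ _i : Fin d, ENNReal.ofReal (t ^ (1/((d:ℝ)-1))) :=
          Finset.sum_le_sum fun i _ =>
            Aux14.marginal_bound hd hGmeas hGindep hGdist hB i ht0 htlt1
      _ = (d : ℝ≥0∞) * ENNReal.ofReal (t ^ (1/((d:ℝ)-1))) := by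
          rw [Finset.sum_const, Finset.card_univ, Fintype.card_fin, nsmul_eq_mul]
      _ = ENNReal.ofReal ((d:ℝ) * t ^ (1/((d:ℝ)-1))) := by
          rw [ENNReal.ofReal_mul (by positivity), ENNReal.ofReal_natCast]
end

section
/- Let r < d be positive integers with d ≥ 2, and let Υ be a random variable with values in [0,1] satisfying P(Υ ≤ ε) ≤ d·(ε/(d−r))^{1/(d−1)} for every ε ∈ [0,1]. Set λ = e·d^{2d−2}/(d−r) and κ = exp(1/(λ(d−1))). Then d·κ^λ·E[(1−Υ)^λ] < 1. -/
open MeasureTheory ProbabilityTheory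

lemma aux_norm_log_le : ∀ t ∈ Set.Ioc (0:ℝ) 1, ‖Real.log t‖ ≤ 2 * t ^ (-(1/2) : ℝ) := by
  rintro t ⟨ht0, ht1⟩
  have htp : (0:ℝ) < t ^ (-(1/2):ℝ) := Real.rpow_pos_of_pos ht0 _
  have hlog : Real.log (t ^ (-(1/2):ℝ)) = -(1/2) * Real.log t := Real.log_rpow ht0 _
  have h1 : Real.log (t ^ (-(1/2):ℝ)) ≤ t ^ (-(1/2):ℝ) - 1 := Real.log_le_sub_one_of_pos htp
  have hlt : Real.log t ≤ 0 := Real.log_nonpos ht0.le ht1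
  rw [Real.norm_eq_abs, abs_of_nonpos hlt]
  nlinarith

lemma aux_log_integrable : IntegrableOn Real.log (Set.Ioc (0:ℝ) 1) volume := by
  have hint : IntegrableOn (fun t : ℝ => 2 * t ^ (-(1/2):ℝ)) (Set.Ioc 0 1) volume := by
    have h := intervalIntegral.intervalIntegrable_rpow' (a := 0) (b := 1) (r := -(1/2)) (by norm_num)
    rw [intervalIntegrable_iff_integrableOn_Ioc_of_le (by norm_num)] at h
    exact h.const_mul 2
  refine hint.mono' Real.measurable_log.aestronglyMeasurable ?_
  exact (ae_restrict_iff' measurableSet_Ioc).2 (Filter.Eventually.of_forall aux_norm_log_le)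

lemma aux_integral_log : ∫ t in Set.Ioo (0:ℝ) 1, Real.log t = -1 := by
  have hF : ∀ x ∈ Set.Ioo (0:ℝ) 1, HasDerivAt (fun x : ℝ => x * Real.log x - x) (Real.log x) x := by
    intro x hx
    have h1 := Real.hasDerivAt_mul_log hx.1.ne'
    have h2 := h1.sub (hasDerivAt_id x)
    exact h2.congr_deriv (by ring)
  have hint : IntervalIntegrable Real.log volume 0 1 := by
    rw [intervalIntegrable_iff_integrableOn_Ioc_of_le (by norm_num)]
    exact aux_log_integrable
  have hc : Continuous fun x : ℝ => x * Real.log x - x :=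
    Real.continuous_mul_log.sub continuous_id
  have h0 : Filter.Tendsto (fun x : ℝ => x * Real.log x - x) (nhdsWithin 0 (Set.Ioi 0)) (nhds 0) := by
    have := (hc.tendsto 0).mono_left (nhdsWithin_le_nhds (s := Set.Ioi (0:ℝ)))
    simpa using this
  have h1 : Filter.Tendsto (fun x : ℝ => x * Real.log x - x) (nhdsWithin 1 (Set.Iio 1)) (nhds (-1)) := by
    have := (hc.tendsto 1).mono_left (nhdsWithin_le_nhds (s := Set.Iio (1:ℝ)))
    simpa using this
  have key := intervalIntegral.integral_eq_sub_of_hasDerivAt_of_tendsto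
    (by norm_num : (0:ℝ) < 1) hF hint h0 h1
  rw [intervalIntegral.integral_of_le (by norm_num : (0:ℝ) ≤ 1)] at key
  rw [← MeasureTheory.integral_Ioc_eq_integral_Ioo]
  simpa using key
theorem statement15 (d r : ℕ) (hr : 0 < r) (hrd : r < d) (hd : 2 ≤ d)
    {Ω : Type*} [MeasurableSpace Ω] (μ : Measure Ω) [IsProbabilityMeasure μ]
    (Υ : Ω → ℝ) (hmeas : Measurable Υ)
    (hval : ∀ ω, Υ ω ∈ Set.Icc (0 : ℝ) 1)
    (htail : ∀ ε ∈ Set.Icc (0 : ℝ) 1,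
        μ {ω | Υ ω ≤ ε} ≤
          ENNReal.ofReal ((d : ℝ) * (ε / ((d : ℝ) - (r : ℝ))) ^ (1 / ((d : ℝ) - 1))))
    (lam κ : ℝ)
    (hlam : lam = Real.exp 1 * (d : ℝ) ^ (2 * d - 2) / ((d : ℝ) - (r : ℝ)))
    (hκ : κ = Real.exp (1 / (lam * ((d : ℝ) - 1)))) :
    (d : ℝ) * κ ^ lam * ∫ ω, (1 - Υ ω) ^ lam ∂μ < 1 := by
  have hd2 : (2:ℝ) ≤ (d:ℝ) := by exact_mod_cast hd
  set D : ℝ := (d:ℝ) with hD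
  have hD0 : (0:ℝ) < D := by linarith
  have hDr : (0:ℝ) < D - r := by
    have h : (r:ℝ) < (d:ℝ) := by exact_mod_cast hrd
    rw [← hD] at h
    linarith
  have hD1 : (1:ℝ) ≤ D - 1 := by linarith
  set p : ℝ := 1 / (D - 1) with hp
  have hp0 : 0 < p := div_pos one_pos (by linarith)
  have hp1 : p ≤ 1 := by
    rw [hp, div_le_one (by linarith)]; linarith
  have hlam0 : 0 < lam := by
    rw [hlam]
    exact div_pos (by positivity) hDr
  -- κ ^ lam = exp p
  have hκlam : κ ^ lam = Real.exp p := by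
    rw [hκ, Real.rpow_def_of_pos (Real.exp_pos _), Real.log_exp]
    congr 1
    rw [hp]
    field_simp
  -- K
  have hK : (lam * (D - r)) ^ p = Real.exp p * D ^ 2 := by
    have h1 : lam * (D - r) = Real.exp 1 * D ^ (2 * d - 2) := by
      rw [hlam]; field_simp
    have hcast : ((2 * d - 2 : ℕ) : ℝ) = 2 * (D - 1) := by
      have h2d : 2 ≤ 2 * d := by omega
      rw [Nat.cast_sub h2d]; push_cast; ring
    rw [h1, Real.mul_rpow (Real.exp_pos 1).le (by positivity), Real.exp_one_rpow]
    congr 1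
    rw [← Real.rpow_natCast D (2 * d - 2), ← Real.rpow_mul hD0.le, hcast]
    have h2 : 2 * (D - 1) * p = 2 := by rw [hp]; field_simp
    rw [h2, show (2:ℝ) = ((2:ℕ):ℝ) by norm_num, Real.rpow_natCast]
  set K : ℝ := Real.exp p * D ^ 2 with hKdef
  have hK0 : 0 < K := by positivity
  -- measurability / integrability
  have hmg : Measurable fun ω => Real.exp (-(lam * Υ ω)) :=
    ((measurable_const.mul hmeas).neg).exp
  have hg_le_one : ∀ ω, Real.exp (-(lam * Υ ω)) ≤ 1 := by
    intro ω
    rw [Real.exp_le_one_iff]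
    have := (hval ω).1
    nlinarith
  have hBint : Integrable (fun ω => Real.exp (-(lam * Υ ω))) μ := by
    refine (integrable_const (1:ℝ)).mono' hmg.aestronglyMeasurable ?_
    filter_upwards with ω
    rw [Real.norm_eq_abs, abs_of_pos (Real.exp_pos _)]
    exact hg_le_one ω
  have hAmeas : Measurable fun ω => (1 - Υ ω) ^ lam := by fun_prop
  have hAint : Integrable (fun ω => (1 - Υ ω) ^ lam) μ := by
    refine (integrable_const (1:ℝ)).mono' hAmeas.aestronglyMeasurable ?_
    filter_upwards with ω
    have h1 : 0 ≤ 1 - Υ ω := by linarith [(hval ω).2]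
    rw [Real.norm_eq_abs, abs_of_nonneg (Real.rpow_nonneg h1 _)]
    exact Real.rpow_le_one h1 (by linarith [(hval ω).1]) hlam0.le
  -- a.e. Υ > 0
  have hpos_ae : ∀ᵐ ω ∂μ, 0 < Υ ω := by
    have h0 : μ {ω | Υ ω ≤ 0} = 0 := by
      have h := htail 0 ⟨le_refl 0, zero_le_one⟩
      simpa [zero_div, Real.zero_rpow hp0.ne'] using h
    rw [ae_iff]
    convert h0 using 2
    ext ω
    simp [not_lt]
  -- pointwise strict comparison
  have hlt_ae : ∀ᵐ ω ∂μ, (1 - Υ ω) ^ lam < Real.exp (-(lam * Υ ω)) := by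
    filter_upwards [hpos_ae] with ω hω
    rcases eq_or_lt_of_le (hval ω).2 with h | h
    · rw [h]
      simp only [sub_self]
      rw [Real.zero_rpow hlam0.ne']
      exact Real.exp_pos _
    · have hb : 0 < 1 - Υ ω := by linarith
      rw [Real.rpow_def_of_pos hb, Real.exp_lt_exp]
      have hne : 1 - Υ ω ≠ 1 := by intro hc; linarith
      have hlog : Real.log (1 - Υ ω) < -(Υ ω) := by
        have := Real.log_lt_sub_one_of_pos hb hne
        linarith
      nlinarith
  -- strict integral inequality
  have hAB : ∫ ω, (1 - Υ ω) ^ lam ∂μ < ∫ ω, Real.exp (-(lam * Υ ω)) ∂μ := by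
    rcases (integral_mono_ae hAint hBint (hlt_ae.mono fun ω h => h.le)).lt_or_eq with h | h
    · exact h
    · exfalso
      have hz : ∫ ω, (Real.exp (-(lam * Υ ω)) - (1 - Υ ω) ^ lam) ∂μ = 0 := by
        rw [integral_sub hBint hAint, h]; ring
      have hnn : 0 ≤ᵐ[μ] fun ω => Real.exp (-(lam * Υ ω)) - (1 - Υ ω) ^ lam :=
        hlt_ae.mono fun ω h => by simp only [Pi.zero_apply, sub_nonneg]; exact h.le
      have heq0 := (integral_eq_zero_iff_of_nonneg_ae hnn (hBint.sub hAint)).mp hz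
      haveI : Filter.NeBot (ae μ) := ae_neBot.mpr (IsProbabilityMeasure.ne_zero μ)
      obtain ⟨ω, h1, h2⟩ := (heq0.and hlt_ae).exists
      simp only [Pi.zero_apply] at h1
      linarith
  -- layer cake bound
  have hB_nn : 0 ≤ᵐ[μ] fun ω => Real.exp (-(lam * Υ ω)) :=
    Filter.Eventually.of_forall fun ω => (Real.exp_pos _).le
  have hBlint : ∫ ω, Real.exp (-(lam * Υ ω)) ∂μ
      = (∫⁻ ω, ENNReal.ofReal (Real.exp (-(lam * Υ ω))) ∂μ).toReal :=
    integral_eq_lintegral_of_nonneg_ae hB_nn hmg.aestronglyMeasurable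
  have hlayer : ∫⁻ ω, ENNReal.ofReal (Real.exp (-(lam * Υ ω))) ∂μ
      = ∫⁻ t in Set.Ioi (0:ℝ), μ {ω | t < Real.exp (-(lam * Υ ω))} :=
    lintegral_eq_lintegral_meas_lt μ hB_nn hmg.aemeasurable
  set ψ : ℝ → ℝ := fun t => (D / K) * ((1 - p) + p * (-Real.log t)) with hψdef
  have hψmeas : Measurable fun t => ENNReal.ofReal (ψ t) := by
    apply ENNReal.measurable_ofReal.comp
    exact measurable_const.mul (measurable_const.add (measurable_const.mul Real.measurable_log.neg))
  have hbound : ∀ t ∈ Set.Ioi (0:ℝ), μ {ω | t < Real.exp (-(lam * Υ ω))}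
      ≤ (Set.Ioo (0:ℝ) 1).indicator (fun t => ENNReal.ofReal (ψ t)) t := by
    intro t ht
    rw [Set.mem_Ioi] at ht
    by_cases ht1 : t < 1
    · rw [Set.indicator_of_mem (Set.mem_Ioo.mpr ⟨ht, ht1⟩)]
      set L : ℝ := -Real.log t with hL
      have hL0 : 0 < L := by
        rw [hL]; simpa using Real.log_neg ht ht1
      have hsub : {ω | t < Real.exp (-(lam * Υ ω))} ⊆ {ω | Υ ω ≤ min (L / lam) 1} := by
        intro ω hω
        simp only [Set.mem_setOf_eq] at hω ⊢
        have hlog : Real.log t < -(lam * Υ ω) := by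
          have := Real.log_lt_log ht hω
          rwa [Real.log_exp] at this
        have hΥ : Υ ω < L / lam := by
          rw [lt_div_iff₀ hlam0, hL]
          nlinarith
        exact le_min hΥ.le (hval ω).2
      have hmem : min (L / lam) 1 ∈ Set.Icc (0:ℝ) 1 :=
        Set.mem_Icc.mpr ⟨le_min (div_nonneg hL0.le hlam0.le) zero_le_one, min_le_right _ _⟩
      calc μ {ω | t < Real.exp (-(lam * Υ ω))}
          ≤ μ {ω | Υ ω ≤ min (L / lam) 1} := measure_mono hsub
        _ ≤ ENNReal.ofReal (D * (min (L / lam) 1 / (D - r)) ^ p) := htail _ hmem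
        _ ≤ ENNReal.ofReal (ψ t) := by
            apply ENNReal.ofReal_le_ofReal
            have h1 : (min (L / lam) 1 / (D - ↑r)) ^ p ≤ (L / lam / (D - ↑r)) ^ p := by
              apply Real.rpow_le_rpow (div_nonneg hmem.1 hDr.le) _ hp0.le
              exact div_le_div_of_nonneg_right (min_le_left _ _) hDr.le
            have h2 : L / lam / (D - ↑r) = L / (lam * (D - ↑r)) := div_div _ _ _
            have h3 : (L / (lam * (D - ↑r))) ^ p = L ^ p / K := by
              rw [Real.div_rpow hL0.le (by positivity), hK]
            have h4 : L ^ p ≤ (1 - p) + p * L := by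
              have := Real.geom_mean_le_arith_mean2_weighted
                (by linarith : (0:ℝ) ≤ 1 - p) hp0.le zero_le_one hL0.le (by ring)
              simpa [Real.one_rpow] using this
            rw [hψdef]
            have h5 : (min (L / lam) 1 / (D - ↑r)) ^ p ≤ ((1 - p) + p * L) / K := by
              rw [h2, h3] at h1
              calc (min (L / lam) 1 / (D - ↑r)) ^ p ≤ L ^ p / K := h1
                _ ≤ ((1 - p) + p * L) / K := by
                    apply div_le_div_of_nonneg_right h4 hK0.le
            calc D * (min (L / lam) 1 / (D - ↑r)) ^ p
                ≤ D * (((1 - p) + p * L) / K) := by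
                  exact mul_le_mul_of_nonneg_left h5 hD0.le
              _ = D / K * ((1 - p) + p * (-Real.log t)) := by rw [← hL]; ring
    · have hempty : {ω | t < Real.exp (-(lam * Υ ω))} = ∅ := by
        ext ω
        simp only [Set.mem_setOf_eq, Set.mem_empty_iff_false, iff_false, not_lt]
        calc Real.exp (-(lam * Υ ω)) ≤ 1 := hg_le_one ω
          _ ≤ t := not_lt.mp ht1
      rw [hempty]
      simp
  have hlogint : IntegrableOn Real.log (Set.Ioo (0:ℝ) 1) volume :=
    aux_log_integrable.mono_set Set.Ioo_subset_Ioc_self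
  have hvolIoo : volume (Set.Ioo (0:ℝ) 1) = 1 := by simp
  have hψint : IntegrableOn ψ (Set.Ioo (0:ℝ) 1) volume := by
    apply Integrable.const_mul
    apply Integrable.add
    · exact (integrableOn_const_iff).mpr (Or.inr (by rw [hvolIoo]; exact ENNReal.one_lt_top))
    · exact (hlogint.neg).const_mul p
  have hψnn : 0 ≤ᵐ[volume.restrict (Set.Ioo (0:ℝ) 1)] ψ := by
    have h : ∀ᵐ t ∂(volume.restrict (Set.Ioo (0:ℝ) 1)), 0 ≤ ψ t := by
      rw [ae_restrict_iff' measurableSet_Ioo]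
      apply Filter.Eventually.of_forall
      rintro t ⟨ht0, ht1⟩
      have hlt : Real.log t ≤ 0 := Real.log_nonpos ht0.le ht1.le
      have hnn : 0 ≤ (1 - p) + p * (-Real.log t) := by nlinarith
      rw [hψdef]
      positivity
    filter_upwards [h] with t ht
    simpa using ht
  have hψval : ∫ t in Set.Ioo (0:ℝ) 1, ψ t = D / K := by
    rw [hψdef]
    rw [MeasureTheory.integral_const_mul]
    have hconst : IntegrableOn (fun _ : ℝ => (1:ℝ) - p) (Set.Ioo (0:ℝ) 1) volume :=
      (integrableOn_const_iff).mpr (Or.inr (by rw [hvolIoo]; exact ENNReal.one_lt_top))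
    have hcong : ∫ a in Set.Ioo (0:ℝ) 1, (1 - p + p * -Real.log a)
        = ∫ a in Set.Ioo (0:ℝ) 1, ((1 - p) - p * Real.log a) := by
      apply MeasureTheory.integral_congr_ae
      apply Filter.Eventually.of_forall
      intro a
      ring
    rw [hcong, MeasureTheory.integral_sub hconst (hlogint.const_mul p),
      MeasureTheory.integral_const_mul, aux_integral_log, MeasureTheory.setIntegral_const,
      measureReal_def, hvolIoo]
    simp
  have hlint_le : ∫⁻ t in Set.Ioi (0:ℝ), μ {ω | t < Real.exp (-(lam * Υ ω))}
      ≤ ENNReal.ofReal (D / K) := by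
    calc ∫⁻ t in Set.Ioi (0:ℝ), μ {ω | t < Real.exp (-(lam * Υ ω))}
        ≤ ∫⁻ t in Set.Ioi (0:ℝ), (Set.Ioo (0:ℝ) 1).indicator (fun t => ENNReal.ofReal (ψ t)) t :=
          setLIntegral_mono (hψmeas.indicator measurableSet_Ioo) hbound
      _ = ∫⁻ t in Set.Ioo (0:ℝ) 1, ENNReal.ofReal (ψ t) := by
          rw [lintegral_indicator measurableSet_Ioo, Measure.restrict_restrict measurableSet_Ioo,
            Set.inter_eq_left.mpr (fun x hx => hx.1)]
      _ = ENNReal.ofReal (∫ t in Set.Ioo (0:ℝ) 1, ψ t) :=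
          (ofReal_integral_eq_lintegral_ofReal hψint hψnn).symm
      _ = ENNReal.ofReal (D / K) := by rw [hψval]
  have hB_le : ∫ ω, Real.exp (-(lam * Υ ω)) ∂μ ≤ D / K := by
    rw [hBlint, hlayer]
    calc (∫⁻ t in Set.Ioi (0:ℝ), μ {ω | t < Real.exp (-(lam * Υ ω))}).toReal
        ≤ (ENNReal.ofReal (D / K)).toReal := ENNReal.toReal_mono ENNReal.ofReal_ne_top hlint_le
      _ = D / K := ENNReal.toReal_ofReal (by positivity)
  -- final computation
  have hfinal : D * Real.exp p * (D / K) = 1 := by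
    rw [hKdef]
    field_simp
  rw [hκlam]
  calc D * Real.exp p * ∫ ω, (1 - Υ ω) ^ lam ∂μ
      < D * Real.exp p * ∫ ω, Real.exp (-(lam * Υ ω)) ∂μ := by
        exact mul_lt_mul_of_pos_left hAB (by positivity)
    _ ≤ D * Real.exp p * (D / K) := mul_le_mul_of_nonneg_left hB_le (by positivity)
    _ = 1 := hfinal
end
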